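/- arXiv:1012.0191 — 7 statements merged into one kernel-verified Lean document; each statement's English description precedes it below -/
import Mathlib

section
/- Let a ≥ 2 be an integer, T_a : ℝ/ℤ → ℝ/ℤ the map x ↦ a·x, and A ⊆ ℝ/ℤ a closed set with T_a(A) ⊆ A. Then the topological entropy of T_a restricted to A is at least (upper box dimension of A) · log a. -/
open Filter Topology

/-- A finite subset `B` of the circle is `ε`-separated. -/
def IsSeparated (ε : ℝ) (B : Finset UnitAddCircle) : Prop :=
  ∀ x ∈ B, ∀ y ∈ B, x ≠ y → ε ≤ ‖x - y‖

/-- `sepCount A ε` is the maximal cardinality of an `ε`-separated subset of `A`. -/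
noncomputable def sepCount (A : Set UnitAddCircle) (ε : ℝ) : ℕ :=
  sSup {n : ℕ | ∃ B : Finset UnitAddCircle, ↑B ⊆ A ∧ IsSeparated ε B ∧ B.card = n}

/-- The upper box dimension of `A ⊆ ℝ/ℤ`:
`limsup_{ε → 0⁺} log s(A,ε) / log (1/ε)`. -/
noncomputable def upperBoxDim (A : Set UnitAddCircle) : ℝ :=
  limsup (fun ε : ℝ => Real.log (sepCount A ε) / Real.log (1 / ε)) (𝓝[>] 0)

/-- A finite subset `B` is `(n,ε)`-separated with respect to `T`. -/
def IsDynSeparated (T : UnitAddCircle → UnitAddCircle) (n : ℕ) (ε : ℝ)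
    (B : Finset UnitAddCircle) : Prop :=
  ∀ x ∈ B, ∀ y ∈ B, x ≠ y → ∃ i < n, ε ≤ ‖T^[i] x - T^[i] y‖

/-- `dynSepCount T A n ε` is the maximal cardinality of an `(n,ε)`-separated subset of `A`
with respect to `T`. -/
noncomputable def dynSepCount (T : UnitAddCircle → UnitAddCircle) (A : Set UnitAddCircle)
    (n : ℕ) (ε : ℝ) : ℕ :=
  sSup {m : ℕ | ∃ B : Finset UnitAddCircle, ↑B ⊆ A ∧ IsDynSeparated T n ε B ∧ B.card = m}

/-- The topological entropy of `T` restricted to `A`, defined via separated sets: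
`h_top(T) = lim_{ε→0⁺} limsup_{n→∞} (log s_n(T,ε))/n`. -/
noncomputable def topEntropy (T : UnitAddCircle → UnitAddCircle) (A : Set UnitAddCircle) : ℝ :=
  limsup (fun ε : ℝ =>
    limsup (fun n : ℕ => Real.log (dynSepCount T A n ε) / n) atTop) (𝓝[>] (0 : ℝ))

/-! ### Auxiliary lemmas -/

lemma aux_norm_coe_le_abs (r : ℝ) : ‖(r : UnitAddCircle)‖ ≤ |r| := by
  rcases le_or_gt (|r|) (1/2) with h | h
  · exact le_of_eq ((AddCircle.norm_coe_eq_abs_iff 1 one_ne_zero).2 (by simpa using h))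
  · calc ‖(r : UnitAddCircle)‖ ≤ |(1:ℝ)|/2 := AddCircle.norm_le_half_period 1 one_ne_zero
      _ ≤ |r| := by rw [abs_one]; linarith

lemma aux_exists_rep (z : UnitAddCircle) : ∃ r : ℝ, z = (r : UnitAddCircle) ∧ |r| = ‖z‖ := by
  obtain ⟨x, rfl⟩ := QuotientAddGroup.mk_surjective z
  refine ⟨x - round x, ?_, ?_⟩
  · have h0 : ((round x : ℝ) : UnitAddCircle) = 0 := by simp
    rw [sub_eq_add_neg]
    show _ = (x : UnitAddCircle) + (-(round x : ℝ) : ℝ)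
    norm_cast at h0 ⊢
    simp [h0]
  · rw [UnitAddCircle.norm_eq]

lemma aux_norm_smul_eq (a : ℕ) (ha : 1 ≤ a) (z : UnitAddCircle) (hz : ‖z‖ ≤ 1/(2*a)) :
    ‖a • z‖ = a * ‖z‖ := by
  obtain ⟨r, rfl, hr⟩ := aux_exists_rep z
  have ha' : (0:ℝ) < a := by exact_mod_cast ha
  have h1 : a • ((r : UnitAddCircle)) = ((a * r : ℝ) : UnitAddCircle) := by
    rw [← nsmul_eq_mul, ← QuotientAddGroup.mk_nsmul]
  rw [h1, ← hr]
  have habs : |(a:ℝ) * r| ≤ |(1:ℝ)|/2 := by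
    rw [abs_mul, abs_one, abs_of_pos ha']
    rw [← hr] at hz
    calc (a:ℝ) * |r| ≤ (a:ℝ) * (1/(2*a)) := by nlinarith
      _ = 1/2 := by field_simp
  rw [(AddCircle.norm_coe_eq_abs_iff 1 one_ne_zero).2 habs, abs_mul, abs_of_pos ha']

lemma aux_escape (a : ℕ) (ha : 2 ≤ a) {ε : ℝ} (hε2 : ε ≤ 1/(2*a)) :
    ∀ (n : ℕ) (z : UnitAddCircle), ε / a^n ≤ ‖z‖ → ∃ i ≤ n, ε ≤ ‖a^i • z‖ := by
  have ha0 : (0:ℝ) < a := by positivity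
  have ha1 : 1 ≤ a := by omega
  intro n
  induction n with
  | zero => intro z hz; exact ⟨0, le_refl 0, by simpa using hz⟩
  | succ n ih =>
    intro z hz
    rcases le_or_gt ‖z‖ (1/(2*a)) with h | h
    · have hexp := aux_norm_smul_eq a ha1 z h
      have : ε / a^n ≤ ‖a • z‖ := by
        rw [hexp]
        rw [div_le_iff₀ (by positivity)] at hz ⊢
        calc ε ≤ ‖z‖ * (a:ℝ)^(n+1) := hz
          _ = ((a:ℝ) * ‖z‖) * a^n := by ring
      obtain ⟨i, hi, hni⟩ := ih (a • z) this
      refine ⟨i + 1, by omega, ?_⟩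
      rwa [smul_smul, ← pow_succ] at hni
    · exact ⟨0, Nat.zero_le _, by simp; linarith⟩

lemma aux_card_le_of_separated {δ : ℝ} (hδ : 0 < δ) {B : Finset UnitAddCircle}
    (hB : IsSeparated δ B) : B.card ≤ ⌈1/δ⌉₊ := by
  classical
  have key : ∀ z : UnitAddCircle, (AddCircle.equivIco 1 0 z : ℝ) ∈ Set.Ico (0:ℝ) 1 := by
    intro z; simpa using (AddCircle.equivIco 1 0 z).2
  set f : UnitAddCircle → ℕ := fun z => ⌊(AddCircle.equivIco 1 0 z : ℝ) / δ⌋₊ with hf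
  have hmaps : ∀ z ∈ B, f z ∈ Finset.range ⌈1/δ⌉₊ := by
    intro z _
    rw [Finset.mem_range]
    have h1 := (key z).1
    have h2 := (key z).2
    have hlt : (AddCircle.equivIco 1 0 z : ℝ) / δ < 1/δ := by gcongr
    have h3 : ((⌊(AddCircle.equivIco 1 0 z : ℝ) / δ⌋₊ : ℝ)) < (⌈1/δ⌉₊ : ℝ) := by
      calc ((⌊(AddCircle.equivIco 1 0 z : ℝ) / δ⌋₊ : ℝ)) ≤ (AddCircle.equivIco 1 0 z : ℝ) / δ :=
            Nat.floor_le (by positivity)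
        _ < 1/δ := hlt
        _ ≤ _ := Nat.le_ceil _
    exact_mod_cast h3
  have hinj : ∀ x ∈ B, ∀ y ∈ B, f x = f y → x = y := by
    intro x hx y hy hfxy
    by_contra hne
    have hsep := hB x hx y hy hne
    set u := (AddCircle.equivIco 1 0 x : ℝ)
    set v := (AddCircle.equivIco 1 0 y : ℝ)
    have hu0 : 0 ≤ u := (key x).1
    have hv0 : 0 ≤ v := (key y).1
    have h1 : (f x : ℝ) ≤ u/δ := Nat.floor_le (by positivity)
    have h2 : u/δ < f x + 1 := Nat.lt_floor_add_one _
    have h3 : (f y : ℝ) ≤ v/δ := Nat.floor_le (by positivity)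
    have h4 : v/δ < f y + 1 := Nat.lt_floor_add_one _
    have habs : |u - v| < δ := by
      rw [abs_sub_lt_iff]
      rw [hfxy] at h1 h2
      have e1 : u/δ*δ = u := div_mul_cancel₀ u hδ.ne'
      have e2 : v/δ*δ = v := div_mul_cancel₀ v hδ.ne'
      have m1 : u/δ*δ < ((f y : ℝ)+1)*δ := mul_lt_mul_of_pos_right h2 hδ
      have m2 : ((f y : ℝ))*δ ≤ v/δ*δ := mul_le_mul_of_nonneg_right h3 hδ.le
      have m3 : v/δ*δ < ((f y : ℝ)+1)*δ := mul_lt_mul_of_pos_right h4 hδ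
      have m4 : ((f y : ℝ))*δ ≤ u/δ*δ := mul_le_mul_of_nonneg_right h1 hδ.le
      constructor <;> nlinarith
    have hxy : ‖x - y‖ < δ := by
      have hxu : ((u : ℝ) : UnitAddCircle) = x := (AddCircle.equivIco 1 0).symm_apply_apply x
      have hyv : ((v : ℝ) : UnitAddCircle) = y := (AddCircle.equivIco 1 0).symm_apply_apply y
      calc ‖x - y‖ = ‖((u - v : ℝ) : UnitAddCircle)‖ := by rw [← hxu, ← hyv]; norm_cast
        _ ≤ |u - v| := aux_norm_coe_le_abs _
        _ < δ := habs
    linarith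
  calc B.card ≤ (Finset.range ⌈1/δ⌉₊).card := Finset.card_le_card_of_injOn f hmaps hinj
    _ = ⌈1/δ⌉₊ := Finset.card_range _

/-! ### Counting sets -/

/-- The set of cardinalities of `δ`-separated subsets of `A`. -/
def sepSet (A : Set UnitAddCircle) (δ : ℝ) : Set ℕ :=
  {n : ℕ | ∃ B : Finset UnitAddCircle, ↑B ⊆ A ∧ IsSeparated δ B ∧ B.card = n}

/-- The set of cardinalities of `(n,ε)`-separated subsets of `A`. -/
def dynSet (T : UnitAddCircle → UnitAddCircle) (A : Set UnitAddCircle) (n : ℕ) (ε : ℝ) :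
    Set ℕ :=
  {m : ℕ | ∃ B : Finset UnitAddCircle, ↑B ⊆ A ∧ IsDynSeparated T n ε B ∧ B.card = m}

lemma aux_sepSet_nonempty (A : Set UnitAddCircle) (δ : ℝ) : (sepSet A δ).Nonempty :=
  ⟨0, ∅, by simp, fun x hx => absurd hx (Finset.notMem_empty x), Finset.card_empty⟩

lemma aux_dynSet_nonempty (T : UnitAddCircle → UnitAddCircle) (A : Set UnitAddCircle)
    (n : ℕ) (ε : ℝ) : (dynSet T A n ε).Nonempty :=
  ⟨0, ∅, by simp, fun x hx => absurd hx (Finset.notMem_empty x), Finset.card_empty⟩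

lemma aux_sepSet_le (A : Set UnitAddCircle) {δ : ℝ} (hδ : 0 < δ) :
    ∀ n ∈ sepSet A δ, n ≤ ⌈1/δ⌉₊ := by
  rintro n ⟨B, -, hsep, rfl⟩
  exact aux_card_le_of_separated hδ hsep

lemma aux_sepSet_bddAbove (A : Set UnitAddCircle) {δ : ℝ} (hδ : 0 < δ) :
    BddAbove (sepSet A δ) :=
  ⟨⌈1/δ⌉₊, fun _ hn => aux_sepSet_le A hδ _ hn⟩

lemma aux_sepCount_le (A : Set UnitAddCircle) {δ : ℝ} (hδ : 0 < δ) :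
    sepCount A δ ≤ ⌈1/δ⌉₊ :=
  csSup_le (aux_sepSet_nonempty A δ) (aux_sepSet_le A hδ)

lemma aux_sepCount_anti (A : Set UnitAddCircle) {δ' δ : ℝ} (h0 : 0 < δ') (h : δ' ≤ δ) :
    sepCount A δ ≤ sepCount A δ' := by
  apply csSup_le_csSup (aux_sepSet_bddAbove A h0) (aux_sepSet_nonempty A δ)
  rintro n ⟨B, hBA, hsep, rfl⟩
  exact ⟨B, hBA, fun x hx y hy hne => le_trans h (hsep x hx y hy hne), rfl⟩

lemma aux_dynSet_subset_sepSet (a : ℕ) (ha : 2 ≤ a) (A : Set UnitAddCircle) (n : ℕ)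
    {ε : ℝ} (hε : 0 < ε) :
    dynSet (fun x : UnitAddCircle => a • x) A n ε ⊆ sepSet A (ε / a^n) := by
  have ha0 : (0:ℝ) < a := by positivity
  rintro m ⟨B, hBA, hdyn, rfl⟩
  refine ⟨B, hBA, ?_, rfl⟩
  intro x hx y hy hne
  obtain ⟨i, hi, hnorm⟩ := hdyn x hx y hy hne
  rw [smul_iterate] at hnorm
  have h1 : ε ≤ ‖(a^i) • (x - y)‖ := by rwa [smul_sub]
  have h2 : ‖(a^i) • (x - y)‖ ≤ ((a^i : ℕ) : ℝ) * ‖x - y‖ := norm_nsmul_le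
  have h3 : ((a^i : ℕ) : ℝ) * ‖x - y‖ ≤ (a:ℝ)^n * ‖x - y‖ := by
    push_cast
    apply mul_le_mul_of_nonneg_right _ (norm_nonneg _)
    exact pow_le_pow_right₀ (by exact_mod_cast (by omega : 1 ≤ a)) (by omega)
  rw [div_le_iff₀ (by positivity)]
  calc ε ≤ (a:ℝ)^n * ‖x - y‖ := le_trans h1 (le_trans h2 h3)
    _ = ‖x - y‖ * (a:ℝ)^n := by ring

lemma aux_dynSepCount_le (a : ℕ) (ha : 2 ≤ a) (A : Set UnitAddCircle) (n : ℕ)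
    {ε : ℝ} (hε : 0 < ε) :
    dynSepCount (fun x : UnitAddCircle => a • x) A n ε ≤ ⌈1/(ε / a^n)⌉₊ := by
  apply csSup_le (aux_dynSet_nonempty _ A n ε)
  intro m hm
  have ha0 : (0:ℝ) < a := by positivity
  exact aux_sepSet_le A (by positivity) m (aux_dynSet_subset_sepSet a ha A n hε hm)

lemma aux_sepCount_le_dynSepCount (a : ℕ) (ha : 2 ≤ a) (A : Set UnitAddCircle) (n : ℕ)
    {ε : ℝ} (hε : 0 < ε) (hε2 : ε ≤ 1/(2*a)) :
    sepCount A (ε / a^n) ≤ dynSepCount (fun x : UnitAddCircle => a • x) A (n+1) ε := by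
  have ha0 : (0:ℝ) < a := by positivity
  have hbdd : BddAbove (dynSet (fun x : UnitAddCircle => a • x) A (n+1) ε) :=
    ⟨⌈1/(ε / a^(n+1))⌉₊, fun m hm =>
      aux_sepSet_le A (by positivity) m (aux_dynSet_subset_sepSet a ha A (n+1) hε hm)⟩
  apply csSup_le_csSup hbdd (aux_sepSet_nonempty A _)
  rintro m ⟨B, hBA, hsep, rfl⟩
  refine ⟨B, hBA, ?_, rfl⟩
  intro x hx y hy hne
  obtain ⟨i, hi, hni⟩ := aux_escape a ha hε2 n (x - y) (hsep x hx y hy hne)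
  refine ⟨i, by omega, ?_⟩
  show ε ≤ ‖(fun x : UnitAddCircle => a • x)^[i] x - (fun x : UnitAddCircle => a • x)^[i] y‖
  rw [smul_iterate, ← smul_sub]
  exact hni

lemma aux_log_nat_mono {m k : ℕ} (h : m ≤ k) : Real.log m ≤ Real.log k := by
  rcases Nat.eq_zero_or_pos m with rfl | hm
  · simpa using Real.log_natCast_nonneg k
  · exact Real.log_le_log (by exact_mod_cast hm) (by exact_mod_cast h)

lemma aux_log_nat_le {m : ℕ} {y : ℝ} (hy : 1 ≤ y) (h : (m:ℝ) ≤ y) :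
    Real.log m ≤ Real.log y := by
  rcases Nat.eq_zero_or_pos m with rfl | hm
  · simpa using Real.log_nonneg hy
  · exact Real.log_le_log (by exact_mod_cast hm) h

set_option maxHeartbeats 2000000 in
/-- If `a ≥ 2`, `T_a x = a • x` on `ℝ/ℤ`, and `A` is a closed `T_a`-invariant set, then the
topological entropy of `T_a` restricted to `A` is at least `(upper box dimension of A) · log a`. -/
theorem topEntropy_ge_dim_mul_log (a : ℕ) (ha : 2 ≤ a) (A : Set UnitAddCircle)
    (hclosed : IsClosed A) (hinv : (fun x : UnitAddCircle => a • x) '' A ⊆ A) :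
    upperBoxDim A * Real.log a ≤ topEntropy (fun x : UnitAddCircle => a • x) A := by
  classical
  have ha0 : (0:ℝ) < a := by positivity
  have ha1 : (1:ℝ) < a := by exact_mod_cast ha
  set la := Real.log a with hla_def
  have hla : 0 < la := Real.log_pos ha1
  set T : UnitAddCircle → UnitAddCircle := fun x => a • x with hT
  set u : ℝ → ℕ → ℝ := fun ε n => Real.log (dynSepCount T A n ε) / n with hu
  set F : ℝ → ℝ := fun ε => limsup (u ε) atTop with hF
  set g : ℝ → ℝ := fun δ => Real.log (sepCount A δ) / Real.log (1/δ) with hg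
  have hE : topEntropy T A = limsup F (𝓝[>] (0:ℝ)) := rfl
  have hL : upperBoxDim A = limsup g (𝓝[>] (0:ℝ)) := rfl
  set L := upperBoxDim A with hLdef
  -- basic positivity facts
  have hu_nonneg : ∀ ε (n : ℕ), 0 ≤ u ε n := fun ε n =>
    div_nonneg (Real.log_natCast_nonneg _) (Nat.cast_nonneg _)
  -- upper bound on u
  have hu_bound : ∀ ε : ℝ, 0 < ε → ε ≤ 1 → ∀ n : ℕ, 1 ≤ n →
      u ε n ≤ la + Real.log (2/ε) / n := by
    intro ε hε hε1 n hn
    have hpow : (1:ℝ) ≤ (a:ℝ)^n := one_le_pow₀ ha1.le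
    have hd : (dynSepCount T A n ε : ℝ) ≤ (a:ℝ)^n * (2/ε) := by
      have h1 : (dynSepCount T A n ε : ℝ) ≤ (⌈1/(ε/(a:ℝ)^n)⌉₊ : ℝ) :=
        Nat.cast_le.2 (aux_dynSepCount_le a ha A n hε)
      have h2 : (⌈1/(ε/(a:ℝ)^n)⌉₊ : ℝ) < 1/(ε/(a:ℝ)^n) + 1 :=
        Nat.ceil_lt_add_one (by positivity)
      have h3 : 1/(ε/(a:ℝ)^n) = (a:ℝ)^n/ε := one_div_div _ _
      have h4 : (1:ℝ) ≤ (a:ℝ)^n/ε := by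
        rw [le_div_iff₀ hε]; nlinarith
      have h5 : (a:ℝ)^n/ε + 1 ≤ (a:ℝ)^n * (2/ε) := by
        have : (a:ℝ)^n * (2/ε) = (a:ℝ)^n/ε + (a:ℝ)^n/ε := by ring
        rw [this]; linarith
      rw [h3] at h1 h2
      linarith
    have h2e : (1:ℝ) ≤ (a:ℝ)^n * (2/ε) := by
      have : (1:ℝ) ≤ 2/ε := by rw [le_div_iff₀ hε]; linarith
      nlinarith
    have hlog : Real.log (dynSepCount T A n ε) ≤ n*la + Real.log (2/ε) := by
      have h1 := aux_log_nat_le h2e hd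
      rwa [Real.log_mul (by positivity) (by positivity), Real.log_pow] at h1
    have hn0 : (0:ℝ) < n := by exact_mod_cast hn
    have : u ε n = Real.log (dynSepCount T A n ε) / n := rfl
    rw [this]
    calc Real.log (dynSepCount T A n ε) / n ≤ ((n:ℝ)*la + Real.log (2/ε))/n := by gcongr
      _ = la + Real.log (2/ε)/n := by field_simp
  have hC : ∀ ε:ℝ, 0 < ε → ε ≤ 1 → 0 ≤ Real.log (2/ε) := by
    intro ε hε hε1
    apply Real.log_nonneg
    rw [le_div_iff₀ hε]; linarith
  have hubdd : ∀ ε:ℝ, 0 < ε → ε ≤ 1 → IsBoundedUnder (· ≤ ·) atTop (u ε) := by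
    intro ε hε hε1
    refine ⟨la + Real.log (2/ε), eventually_map.2 ?_⟩
    filter_upwards [eventually_ge_atTop 1] with n hn
    have h1 := hu_bound ε hε hε1 n hn
    have h2 : Real.log (2/ε)/n ≤ Real.log (2/ε) := by
      apply div_le_self (hC ε hε hε1)
      exact_mod_cast hn
    linarith
  have hF_le : ∀ ε:ℝ, 0 < ε → ε ≤ 1 → F ε ≤ la := by
    intro ε hε hε1
    apply le_of_forall_pos_le_add
    intro η hη
    apply limsup_le_of_le (isCoboundedUnder_le_of_le atTop (fun n => hu_nonneg ε n))
    have htend : Tendsto (fun n : ℕ => Real.log (2/ε) / n) atTop (𝓝 0) :=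
      tendsto_const_div_atTop_nhds_zero_nat _
    filter_upwards [eventually_ge_atTop 1, htend.eventually (gt_mem_nhds hη)] with n hn hlt
    have := hu_bound ε hε hε1 n hn
    linarith
  have hFbdd : IsBoundedUnder (· ≤ ·) (𝓝[>](0:ℝ)) F := by
    refine ⟨la, eventually_map.2 ?_⟩
    filter_upwards [Ioo_mem_nhdsGT_of_mem (Set.left_mem_Ico.2 one_pos)] with ε hε
    exact hF_le ε hε.1 hε.2.le
  have hg0 : ∀ᶠ δ in 𝓝[>](0:ℝ), (0:ℝ) ≤ g δ := by
    filter_upwards [Ioo_mem_nhdsGT_of_mem (Set.left_mem_Ico.2 one_pos)] with δ hδ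
    apply div_nonneg (Real.log_natCast_nonneg _)
    apply Real.log_nonneg
    rw [le_div_iff₀ hδ.1]; linarith [hδ.2]
  have hgcob : IsCoboundedUnder (· ≤ ·) (𝓝[>](0:ℝ)) g :=
    isCoboundedUnder_le_of_eventually_le _ hg0
  -- the key lower bound
  have key : ∀ ε:ℝ, 0 < ε → ε ≤ 1/(a:ℝ)^2 → L * la ≤ F ε := by
    intro ε hε hεa
    have ha2 : (2:ℝ) ≤ (a:ℝ) := by exact_mod_cast ha
    have hale : (2:ℝ)*a ≤ (a:ℝ)^2 := by nlinarith
    have hε2a : ε ≤ 1/(2*(a:ℝ)) :=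
      le_trans hεa (one_div_le_one_div_of_le (by positivity) hale)
    have hε1 : ε ≤ 1 := by
      refine le_trans hεa ?_
      rw [div_le_one (by positivity)]; nlinarith
    have ha2inv : (a:ℝ)^2 ≤ 1/ε := by
      rw [le_div_iff₀ hε]
      have := (le_div_iff₀ (by positivity : (0:ℝ) < (a:ℝ)^2)).1 hεa
      linarith [this]
    have hlogε : 2*la ≤ Real.log (1/ε) := by
      calc 2*la = Real.log ((a:ℝ)^2) := by rw [Real.log_pow]; push_cast; ring
        _ ≤ Real.log (1/ε) := Real.log_le_log (by positivity) ha2inv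
    apply le_of_forall_pos_le_add
    intro η hη
    have hη' : 0 < η/la := by positivity
    suffices hs : (L - η/la) * la ≤ F ε by
      have heq : (L - η/la)*la = L*la - η := by field_simp
      rw [heq] at hs; linarith
    apply le_limsup_of_frequently_le _ (hubdd ε hε hε1)
    rw [frequently_atTop]
    intro N
    have hfreq : ∃ᶠ δ in 𝓝[>](0:ℝ), L - η/la < g δ := by
      apply frequently_lt_of_lt_limsup hgcob
      exact lt_of_lt_of_le (sub_lt_self _ hη') (le_of_eq hL)
    have hev : ∀ᶠ δ in 𝓝[>](0:ℝ), δ ∈ Set.Ioo (0:ℝ) (ε/(a:ℝ)^(N+1)) :=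
      Ioo_mem_nhdsGT_of_mem (Set.left_mem_Ico.2 (by positivity))
    obtain ⟨δ, hgδ, hδ0, hδlt⟩ := (hfreq.and_eventually hev).exists
    have hex : ∃ m : ℕ, ε/(a:ℝ)^m < δ := by
      have h1 : Tendsto (fun m : ℕ => ε * ((a:ℝ)⁻¹)^m) atTop (𝓝 0) := by
        have h0 := tendsto_pow_atTop_nhds_zero_of_lt_one
          (by positivity : (0:ℝ) ≤ (a:ℝ)⁻¹) (inv_lt_one_of_one_lt₀ ha1)
        simpa using h0.const_mul ε
      obtain ⟨m, hm⟩ := (h1.eventually (gt_mem_nhds hδ0)).exists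
      exact ⟨m, by rwa [div_eq_mul_inv, ← inv_pow]⟩
    obtain ⟨m0, hm0, hmin⟩ : ∃ m0 : ℕ, ε/(a:ℝ)^m0 < δ ∧ ∀ k, k < m0 → ¬(ε/(a:ℝ)^k < δ) :=
      ⟨Nat.find hex, Nat.find_spec hex, fun k hk => Nat.find_min hex hk⟩
    have hm0N : N + 2 ≤ m0 := by
      by_contra hcon
      push_neg at hcon
      have hpowle : (a:ℝ)^m0 ≤ (a:ℝ)^(N+1) := pow_le_pow_right₀ ha1.le (by omega)
      have h9 : ε/(a:ℝ)^(N+1) ≤ ε/(a:ℝ)^m0 :=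
        div_le_div_of_nonneg_left hε.le (by positivity) hpowle
      linarith
    obtain ⟨n, rfl⟩ : ∃ n, m0 = n + 1 := ⟨m0 - 1, by omega⟩
    have hδle : δ ≤ ε/(a:ℝ)^n := not_lt.1 (hmin n (by omega))
    have hδgt : ε/(a:ℝ)^(n+1) < δ := hm0
    refine ⟨n+2, by omega, ?_⟩
    have h1 : sepCount A δ ≤ sepCount A (ε/(a:ℝ)^(n+1)) :=
      aux_sepCount_anti A (by positivity) hδgt.le
    have h2 : sepCount A (ε/(a:ℝ)^(n+1)) ≤ dynSepCount T A (n+2) ε :=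
      aux_sepCount_le_dynSepCount a ha A (n+1) hε hε2a
    have hlog : Real.log (sepCount A δ) ≤ Real.log (dynSepCount T A (n+2) ε) :=
      aux_log_nat_mono (h1.trans h2)
    have hd1 : (a:ℝ)^n/ε ≤ 1/δ := by
      rw [div_le_div_iff₀ hε hδ0]
      have := (le_div_iff₀ (by positivity : (0:ℝ) < (a:ℝ)^n)).1 hδle
      nlinarith
    have hden : ((n:ℝ)+2) * la ≤ Real.log (1/δ) := by
      calc ((n:ℝ)+2)*la = (n:ℝ)*la + 2*la := by ring
        _ ≤ Real.log ((a:ℝ)^n) + Real.log (1/ε) := by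
            rw [Real.log_pow]; push_cast; linarith
        _ = Real.log ((a:ℝ)^n * (1/ε)) := (Real.log_mul (by positivity) (by positivity)).symm
        _ = Real.log ((a:ℝ)^n/ε) := by rw [mul_one_div]
        _ ≤ Real.log (1/δ) := Real.log_le_log (by positivity) hd1
    have hdenpos : 0 < ((n:ℝ)+2)*la := by positivity
    have hstep : g δ ≤ Real.log (dynSepCount T A (n+2) ε) / (((n:ℝ)+2)*la) := by
      have hgval : g δ = Real.log (sepCount A δ) / Real.log (1/δ) := rfl
      rw [hgval]
      calc Real.log (sepCount A δ) / Real.log (1/δ)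
          ≤ Real.log (sepCount A δ) / (((n:ℝ)+2)*la) :=
            div_le_div_of_nonneg_left (Real.log_natCast_nonneg _) hdenpos hden
        _ ≤ _ := by gcongr
    have hfin : L - η/la < Real.log (dynSepCount T A (n+2) ε) / (((n:ℝ)+2)*la) :=
      lt_of_lt_of_le hgδ hstep
    have hmain : (L - η/la) * la ≤ Real.log (dynSepCount T A (n+2) ε) / ((n:ℝ)+2) := by
      rw [← div_div] at hfin
      have := (lt_div_iff₀ hla).1 hfin
      linarith
    have hcast : ((n+2 : ℕ) : ℝ) = (n:ℝ)+2 := by push_cast; ring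
    have huval : u ε (n+2) = Real.log (dynSepCount T A (n+2) ε) / ((n:ℝ)+2) := by
      rw [hu]; simp only []; rw [hcast]
    rw [huval]
    exact hmain
  -- conclude
  rw [hE]
  apply le_limsup_of_frequently_le _ hFbdd
  apply Eventually.frequently
  filter_upwards [Ioo_mem_nhdsGT_of_mem (Set.left_mem_Ico.2 (by positivity : (0:ℝ) < 1/(a:ℝ)^2))]
    with ε hε
  exact key ε hε.1 hε.2.le
end

section
/- Let a ≥ 2 be a natural number and α, β ∈ ℝ/ℤ. If ‖α - β‖ ≥ a^{-n} for some n ≥ 1, then there exists an integer ℓ with 0 ≤ ℓ < n such that ‖a^ℓ α - a^ℓ β‖ ≥ 1/(2a). -/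
lemma norm_nsmul_eq_of_le_half (k : ℕ) (x : UnitAddCircle) (h : (k : ℝ) * ‖x‖ ≤ 1 / 2) :
    ‖k • x‖ = (k : ℝ) * ‖x‖ := by
  induction x using QuotientAddGroup.induction_on with
  | H r =>
    set s : ℝ := r - round r with hs
    have h0 : ((r - s : ℝ) : UnitAddCircle) = 0 := by
      rw [AddCircle.coe_eq_zero_iff]
      exact ⟨round r, by simp [hs]⟩
    have hxr : ((r : ℝ) : UnitAddCircle) = (s : UnitAddCircle) := by
      rw [show (r : ℝ) = s + (r - s) by ring, AddCircle.coe_add, h0, add_zero]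
    have hnorm : ‖((s : ℝ) : UnitAddCircle)‖ = |s| := by
      rw [← hxr]; exact UnitAddCircle.norm_eq
    rw [hxr] at h ⊢
    have hksmul : k • ((s : ℝ) : UnitAddCircle) = ((k * s : ℝ) : UnitAddCircle) := by
      rw [← AddCircle.coe_nsmul]; norm_num
    rw [hksmul, hnorm]
    have hle : |(k : ℝ) * s| ≤ |(1 : ℝ)| / 2 := by
      rw [abs_mul, Nat.abs_cast]; rw [hnorm] at h; simpa using h
    rw [(AddCircle.norm_coe_eq_abs_iff (1 : ℝ) one_ne_zero).mpr hle, abs_mul, Nat.abs_cast]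

/-- If `a ≥ 2`, `α, β ∈ ℝ/ℤ` and `‖α - β‖ ≥ a^{-n}` for some `n ≥ 1` (where `‖·‖` is the
distance to the nearest integer), then there is `0 ≤ ℓ < n` with
`‖a^ℓ α - a^ℓ β‖ ≥ 1/(2a)`, where `a^ℓ α` is the `ℓ`-th iterate of the times-`a` map. -/
theorem exists_iterate_separated (a : ℕ) (ha : 2 ≤ a) (α β : UnitAddCircle) (n : ℕ)
    (hn : 1 ≤ n) (h : ((a : ℝ) ^ n)⁻¹ ≤ ‖α - β‖) :
    ∃ ℓ < n, 1 / (2 * (a : ℝ)) ≤ ‖a ^ ℓ • α - a ^ ℓ • β‖ := by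
  by_contra hc
  push_neg at hc
  set γ := α - β with hγ
  have hc' : ∀ ℓ < n, ‖a ^ ℓ • γ‖ < 1 / (2 * (a : ℝ)) := by
    intro ℓ hℓ
    have := hc ℓ hℓ
    rwa [← smul_sub] at this
  have ha0 : (0 : ℝ) < a := by positivity
  have key : ∀ ℓ < n, ‖a ^ ℓ • γ‖ = (a : ℝ) ^ ℓ * ‖γ‖ := by
    intro ℓ hℓ
    induction ℓ with
    | zero => simp
    | succ m ih =>
      have hm : m < n := Nat.lt_of_succ_lt hℓ
      have ihm := ih hm
      have hsmall : (a : ℝ) * ‖a ^ m • γ‖ ≤ 1 / 2 := by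
        have := hc' m hm
        have : (a : ℝ) * ‖a ^ m • γ‖ < (a : ℝ) * (1 / (2 * a)) :=
          mul_lt_mul_of_pos_left this ha0
        calc (a : ℝ) * ‖a ^ m • γ‖ ≤ (a : ℝ) * (1 / (2 * a)) := this.le
          _ = 1 / 2 := by field_simp
      have : a ^ (m + 1) • γ = a • (a ^ m • γ) := by
        rw [← mul_smul, pow_succ, mul_comm]
      rw [this, norm_nsmul_eq_of_le_half a _ hsmall, ihm, pow_succ]
      ring
  have hlast := key (n - 1) (by omega)
  have hlt := hc' (n - 1) (by omega)
  rw [hlast] at hlt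
  have hge : (a : ℝ) ^ (n - 1) * ‖γ‖ ≥ 1 / a := by
    have : (a : ℝ) ^ (n - 1) * ((a : ℝ) ^ n)⁻¹ = 1 / a := by
      have hpow : (a : ℝ) ^ n = (a : ℝ) ^ (n - 1) * a := by
        rw [← pow_succ, Nat.sub_add_cancel hn]
      have hpn : (a : ℝ) ^ (n - 1) ≠ 0 := by positivity
      rw [eq_div_iff (ne_of_gt ha0), hpow]
      field_simp
    calc (1 : ℝ) / a = (a : ℝ) ^ (n - 1) * ((a : ℝ) ^ n)⁻¹ := this.symm
      _ ≤ (a : ℝ) ^ (n - 1) * ‖γ‖ := by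
          apply mul_le_mul_of_nonneg_left h (by positivity)
  have hbad : (1 : ℝ) / a < 1 / (2 * a) := lt_of_le_of_lt hge hlt
  rw [div_lt_div_iff₀ (by positivity) (by positivity)] at hbad
  linarith
end

section
/- Let 𝒟 = {n_k} be a pseudo-absolute value sequence with associated pseudo-absolute value |n|_𝒟 = min{1/n_k : n_k divides n}, and let ℳ(N) = max{k : n_k ≤ N}. Then ∑_{n=1}^N 1/|n|_𝒟 ≍ N·ℳ(N), i.e., there exist positive constants c₁, c₂ (independent of 𝒟 and N) with c₁·N·ℳ(N) ≤ ∑_{n=1}^N 1/|n|_𝒟 ≤ c₂·N·ℳ(N) for all N with ℳ(N) ≥ 1. -/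
/-- `Mfun nk N = max {k : nk k ≤ N}`. -/
noncomputable def Mfun (nk : ℕ → ℕ) (N : ℕ) : ℕ := sSup {k : ℕ | nk k ≤ N}

/-- `dabsInv nk n` is the largest element of the sequence `nk` dividing `n`,
i.e. `1/|n|_𝒟` for the pseudo-absolute value `|n|_𝒟 = min {nk k⁻¹ : nk k ∣ n}`. -/
noncomputable def dabsInv (nk : ℕ → ℕ) (n : ℕ) : ℕ := sSup {d : ℕ | ∃ k, d = nk k ∧ nk k ∣ n}

open Finset

private lemma pav_pos (nk : ℕ → ℕ) (h0 : nk 0 = 1) (hm : StrictMono nk) (k : ℕ) :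
    1 ≤ nk k := h0 ▸ hm.monotone (Nat.zero_le k)

private lemma pav_double (nk : ℕ → ℕ) (h0 : nk 0 = 1) (hm : StrictMono nk)
    (hd : ∀ k, nk k ∣ nk (k + 1)) (k : ℕ) : 2 * nk k ≤ nk (k + 1) := by
  obtain ⟨m, hmeq⟩ := hd k
  have hlt : nk k < nk k * m := hmeq ▸ hm (lt_add_one k)
  have hpos := pav_pos nk h0 hm k
  have hm2 : 2 ≤ m := by
    rcases Nat.lt_or_ge m 2 with h | h
    · interval_cases m <;> omega
    · exact h
  calc 2 * nk k = nk k * 2 := by ring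
    _ ≤ nk k * m := Nat.mul_le_mul_left _ hm2
    _ = nk (k + 1) := hmeq.symm

private lemma pav_sum_le (nk : ℕ → ℕ) (h0 : nk 0 = 1) (hm : StrictMono nk)
    (hd : ∀ k, nk k ∣ nk (k + 1)) (j : ℕ) :
    ∑ i ∈ range (j + 1), nk i ≤ 2 * nk j := by
  induction j with
  | zero => simp [h0]
  | succ j ih =>
      rw [Finset.sum_range_succ]
      have := pav_double nk h0 hm hd j
      have := pav_pos nk h0 hm (j + 1)
      omega

/-- For any pseudo-absolute value sequence `𝒟 = {n_k}`,
`∑_{n=1}^N 1/|n|_𝒟 ≍ N·ℳ(N)` with implied constants independent of `𝒟` and `N`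
(for all `N` with `ℳ(N) ≥ 1`). -/
theorem sum_dabsInv_asymp :
    ∃ c₁ c₂ : ℝ, 0 < c₁ ∧ 0 < c₂ ∧
      ∀ nk : ℕ → ℕ, nk 0 = 1 → StrictMono nk → (∀ k, nk k ∣ nk (k + 1)) →
        ∀ N : ℕ, 1 ≤ Mfun nk N →
          c₁ * N * Mfun nk N ≤ ∑ n ∈ Finset.Icc 1 N, (dabsInv nk n : ℝ) ∧
          ∑ n ∈ Finset.Icc 1 N, (dabsInv nk n : ℝ) ≤ c₂ * N * Mfun nk N := by
  refine ⟨1/4, 2, by norm_num, by norm_num, ?_⟩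
  intro nk h0 hmono hdvd N hM
  set M := Mfun nk N with hMdef
  have hMeq : M = sSup {k : ℕ | nk k ≤ N} := rfl
  have hbdd : BddAbove {k : ℕ | nk k ≤ N} :=
    ⟨N, fun k hk => le_trans hmono.le_apply hk⟩
  have hne : {k : ℕ | nk k ≤ N}.Nonempty := by
    by_contra h
    rw [Set.not_nonempty_iff_eq_empty] at h
    have : M = 0 := by
      have : Mfun nk N = sSup {k : ℕ | nk k ≤ N} := rfl
      rw [hMdef, this, h, csSup_empty]; rfl
    omega
  have hMmem : nk M ≤ N := by rw [hMeq]; exact Nat.sSup_mem hne hbdd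
  have hMub : ∀ k, nk k ≤ N → k ≤ M := fun k hk => hMeq ▸ le_csSup hbdd hk
  have hN1 : 1 ≤ N := le_trans (pav_pos nk h0 hmono M) hMmem
  -- facts about dabsInv
  have hDne : ∀ n : ℕ, 1 ≤ n → {d : ℕ | ∃ k, d = nk k ∧ nk k ∣ n}.Nonempty :=
    fun n _ => ⟨1, 0, h0.symm, h0 ▸ one_dvd n⟩
  have hDbdd : ∀ n : ℕ, 1 ≤ n → BddAbove {d : ℕ | ∃ k, d = nk k ∧ nk k ∣ n} := by
    intro n hn
    exact ⟨n, fun d hd => by obtain ⟨k, rfl, hk⟩ := hd; exact Nat.le_of_dvd hn hk⟩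
  have hDmem : ∀ n : ℕ, 1 ≤ n → ∃ j, dabsInv nk n = nk j ∧ nk j ∣ n :=
    fun n hn => Nat.sSup_mem (hDne n hn) (hDbdd n hn)
  have hDub : ∀ n : ℕ, 1 ≤ n → ∀ k, nk k ∣ n → nk k ≤ dabsInv nk n :=
    fun n hn k hk => le_csSup (hDbdd n hn) ⟨k, rfl, hk⟩
  -- pointwise two-sided bound
  have hpt : ∀ n ∈ Finset.Icc 1 N,
      dabsInv nk n ≤ (∑ k ∈ range (M + 1), if nk k ∣ n then nk k else 0) ∧
      (∑ k ∈ range (M + 1), if nk k ∣ n then nk k else 0) ≤ 2 * dabsInv nk n := by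
    intro n hn
    rw [Finset.mem_Icc] at hn
    obtain ⟨j, hj1, hj2⟩ := hDmem n hn.1
    have hjM : j ≤ M := hMub j (le_trans (Nat.le_of_dvd hn.1 hj2) hn.2)
    constructor
    · have hjmem : j ∈ range (M + 1) := Finset.mem_range.mpr (Nat.lt_succ_of_le hjM)
      have hsing := Finset.single_le_sum (f := fun k => if nk k ∣ n then nk k else 0)
        (fun k _ => Nat.zero_le _) hjmem
      simp only [if_pos hj2] at hsing
      exact hj1 ▸ hsing
    · rw [← Finset.sum_filter]
      have hsub : {k ∈ range (M + 1) | nk k ∣ n} ⊆ range (j + 1) := by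
        intro k hk
        rw [Finset.mem_filter] at hk
        have : nk k ≤ nk j := hj1 ▸ hDub n hn.1 k hk.2
        exact Finset.mem_range.mpr (by have := hmono.lt_iff_lt (a := j) (b := k); omega)
      calc ∑ k ∈ {k ∈ range (M + 1) | nk k ∣ n}, nk k
          ≤ ∑ k ∈ range (j + 1), nk k :=
            Finset.sum_le_sum_of_subset hsub
        _ ≤ 2 * nk j := pav_sum_le nk h0 hmono hdvd j
        _ = 2 * dabsInv nk n := by rw [hj1]
  -- the double sum
  have hswap : ∑ n ∈ Finset.Icc 1 N, ∑ k ∈ range (M + 1), (if nk k ∣ n then nk k else 0)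
      = ∑ k ∈ range (M + 1), nk k * (N / nk k) := by
    rw [Finset.sum_comm]
    refine Finset.sum_congr rfl fun k _ => ?_
    rw [← Finset.sum_filter, Finset.sum_const, smul_eq_mul]
    have : Finset.Icc 1 N = Finset.Ioc 0 N := by rw [← Finset.Icc_add_one_left_eq_Ioc]; rfl
    rw [this, Nat.Ioc_filter_dvd_card_eq_div, Nat.mul_comm]
  -- bounds on each term of the k-sum
  have hterm_ub : ∀ k ∈ range (M + 1), nk k * (N / nk k) ≤ N :=
    fun k _ => Nat.mul_div_le N (nk k)
  have hterm_lb : ∀ k ∈ range (M + 1), N ≤ 2 * (nk k * (N / nk k)) := by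
    intro k hk
    rw [Finset.mem_range] at hk
    have hkN : nk k ≤ N := le_trans (hmono.monotone (by omega)) hMmem
    have hpos := pav_pos nk h0 hmono k
    have h1 : 1 ≤ N / nk k := (Nat.one_le_div_iff hpos).mpr hkN
    have h2 : nk k ≤ nk k * (N / nk k) := Nat.le_mul_of_pos_right _ h1
    have h3 : N < N / nk k * nk k + nk k := Nat.lt_div_mul_add hpos
    have h4 : N / nk k * nk k = nk k * (N / nk k) := Nat.mul_comm _ _
    omega
  -- assemble natural-number bounds
  set S : ℕ := ∑ n ∈ Finset.Icc 1 N, dabsInv nk n with hS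
  have hub : S ≤ (M + 1) * N := by
    calc S ≤ ∑ n ∈ Finset.Icc 1 N, ∑ k ∈ range (M + 1), (if nk k ∣ n then nk k else 0) :=
          Finset.sum_le_sum fun n hn => (hpt n hn).1
      _ = ∑ k ∈ range (M + 1), nk k * (N / nk k) := hswap
      _ ≤ ∑ k ∈ range (M + 1), N := Finset.sum_le_sum hterm_ub
      _ = (M + 1) * N := by rw [Finset.sum_const, Finset.card_range, smul_eq_mul]
  have hlb : (M + 1) * N ≤ 4 * S := by
    calc (M + 1) * N = ∑ k ∈ range (M + 1), N := by
          rw [Finset.sum_const, Finset.card_range, smul_eq_mul]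
      _ ≤ ∑ k ∈ range (M + 1), 2 * (nk k * (N / nk k)) := Finset.sum_le_sum hterm_lb
      _ = 2 * ∑ k ∈ range (M + 1), nk k * (N / nk k) := by rw [Finset.mul_sum]
      _ = 2 * ∑ n ∈ Finset.Icc 1 N, ∑ k ∈ range (M + 1), (if nk k ∣ n then nk k else 0) := by
          rw [hswap]
      _ ≤ 2 * ∑ n ∈ Finset.Icc 1 N, 2 * dabsInv nk n :=
          Nat.mul_le_mul_left _ (Finset.sum_le_sum fun n hn => (hpt n hn).2)
      _ = 4 * S := by rw [← Finset.mul_sum]; ring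
  -- cast to ℝ
  have hScast : ∑ n ∈ Finset.Icc 1 N, (dabsInv nk n : ℝ) = (S : ℝ) := by
    rw [hS]; push_cast; ring
  have hubR : (S : ℝ) ≤ (M + 1) * N := by exact_mod_cast hub
  have hlbR : ((M + 1) * N : ℝ) ≤ 4 * S := by exact_mod_cast hlb
  have hMR : (1 : ℝ) ≤ (M : ℝ) := by exact_mod_cast hM
  have hNR : (0 : ℝ) ≤ (N : ℝ) := Nat.cast_nonneg N
  constructor
  · rw [hScast]
    nlinarith [hlbR]
  · rw [hScast]
    nlinarith [hubR]
end

section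
/- Let 𝒟 be a pseudo-absolute value sequence and ψ : ℕ → ℝ a non-negative decreasing function. Then ∑_{n=1}^∞ λ(A_n) = ∞ if and only if ∑_{n=1}^∞ ℳ(n)·ψ(n) = ∞, where A_n = {α ∈ ℝ/ℤ : ‖nα‖ ≤ ψ(n)/|n|_𝒟} and λ is Lebesgue (Haar) probability measure on ℝ/ℤ. -/
open MeasureTheory
open Finset

lemma nk_pos {nk : ℕ → ℕ} (h0 : nk 0 = 1) (hmono : StrictMono nk) (k : ℕ) : 1 ≤ nk k :=
  h0 ▸ hmono.monotone (Nat.zero_le k)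

lemma nk_double {nk : ℕ → ℕ} (h0 : nk 0 = 1) (hmono : StrictMono nk)
    (hdvd : ∀ k, nk k ∣ nk (k+1)) (k : ℕ) : 2 * nk k ≤ nk (k+1) := by
  obtain ⟨c, hc⟩ := hdvd k
  have h1 : nk k < nk (k+1) := hmono (Nat.lt_succ_self k)
  have hp : 1 ≤ nk k := nk_pos h0 hmono k
  rw [hc] at h1 ⊢
  have h2 : 2 ≤ c := by
    by_contra h
    push_neg at h
    interval_cases c <;> omega
  calc 2 * nk k = nk k * 2 := mul_comm _ _
    _ ≤ nk k * c := Nat.mul_le_mul_left _ h2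

lemma nk_sum_le {nk : ℕ → ℕ} (h0 : nk 0 = 1) (hmono : StrictMono nk)
    (hdvd : ∀ k, nk k ∣ nk (k+1)) (κ : ℕ) : ∑ k ∈ range (κ+1), nk k ≤ 2 * nk κ := by
  induction κ with
  | zero => simp [h0]
  | succ κ ih =>
    rw [Finset.sum_range_succ]
    have := nk_double h0 hmono hdvd κ
    omega

lemma le_nk {nk : ℕ → ℕ} (hmono : StrictMono nk) (k : ℕ) : k ≤ nk k := hmono.le_apply

lemma nk_two {nk : ℕ → ℕ} (h0 : nk 0 = 1) (hmono : StrictMono nk)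
    (hdvd : ∀ k, nk k ∣ nk (k+1)) (k : ℕ) (hk : 1 ≤ k) : 2 ≤ nk k := by
  have h1 : 2 ≤ nk 1 := by have h := nk_double h0 hmono hdvd 0; rw [h0] at h; exact h
  exact h1.trans (hmono.monotone hk)

lemma dabsInv_mem {nk : ℕ → ℕ} (h0 : nk 0 = 1) {n : ℕ} (hn : 1 ≤ n) :
    ∃ κ, dabsInv nk n = nk κ ∧ nk κ ∣ n := by
  have hne : (1 : ℕ) ∈ {d : ℕ | ∃ k, d = nk k ∧ nk k ∣ n} := ⟨0, h0.symm, h0 ▸ one_dvd n⟩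
  have hbdd : BddAbove {d : ℕ | ∃ k, d = nk k ∧ nk k ∣ n} := by
    refine ⟨n, fun d hd => ?_⟩
    obtain ⟨k, rfl, hk⟩ := hd
    exact Nat.le_of_dvd hn hk
  exact Nat.sSup_mem ⟨1, hne⟩ hbdd

lemma le_dabsInv {nk : ℕ → ℕ} {n : ℕ} (hn : 1 ≤ n) (k : ℕ) (h : nk k ∣ n) :
    nk k ≤ dabsInv nk n := by
  have hbdd : BddAbove {d : ℕ | ∃ k, d = nk k ∧ nk k ∣ n} := by
    refine ⟨n, fun d hd => ?_⟩
    obtain ⟨k, rfl, hk⟩ := hd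
    exact Nat.le_of_dvd hn hk
  exact le_csSup hbdd ⟨k, rfl, h⟩

lemma dabsInv_pos {nk : ℕ → ℕ} (h0 : nk 0 = 1) {n : ℕ} (hn : 1 ≤ n) :
    1 ≤ dabsInv nk n := h0 ▸ le_dabsInv hn 0 (h0 ▸ one_dvd n)

lemma nk_Mfun_le {nk : ℕ → ℕ} (h0 : nk 0 = 1) (hmono : StrictMono nk) {n : ℕ} (hn : 1 ≤ n) :
    nk (Mfun nk n) ≤ n := by
  have hne : 0 ∈ {k : ℕ | nk k ≤ n} := by simp [h0, hn]
  have hbdd : BddAbove {k : ℕ | nk k ≤ n} :=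
    ⟨n, fun k hk => (le_nk hmono k).trans hk⟩
  exact Nat.sSup_mem ⟨0, hne⟩ hbdd

lemma Mfun_le_iff {nk : ℕ → ℕ} (h0 : nk 0 = 1) (hmono : StrictMono nk) {n : ℕ} (hn : 1 ≤ n)
    (k : ℕ) : nk k ≤ n ↔ k ≤ Mfun nk n := by
  constructor
  · intro h
    have hbdd : BddAbove {k : ℕ | nk k ≤ n} :=
      ⟨n, fun k hk => (le_nk hmono k).trans hk⟩
    exact le_csSup hbdd h
  · intro h
    exact (hmono.monotone h).trans (nk_Mfun_le h0 hmono hn)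

lemma Mfun_le {nk : ℕ → ℕ} (h0 : nk 0 = 1) (hmono : StrictMono nk) {n : ℕ} (hn : 1 ≤ n) :
    Mfun nk n ≤ n := (le_nk hmono _).trans (nk_Mfun_le h0 hmono hn)

/-- splitting `Ico q (q + M*q)` into blocks of length `q`. -/
lemma sum_Ico_blocks (f : ℕ → ℝ) (q : ℕ) :
    ∀ M, ∑ n ∈ Finset.Ico q (q + M*q), f n
      = ∑ m ∈ Finset.range M, ∑ n ∈ Finset.Ico (q + m*q) (q + m*q + q), f n := by
  intro M
  induction M with
  | zero => simp
  | succ M ih =>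
    rw [Finset.sum_range_succ, ← ih]
    have h1 : q ≤ q + M*q := Nat.le_add_right _ _
    have h2 : q + M*q ≤ q + (M+1)*q := by nlinarith
    rw [← Finset.sum_Ico_consecutive f h1 h2]
    congr 2
    ring_nf

/-- sum over multiples of `q` in `[1, N]`. -/
lemma sum_multiples (f : ℕ → ℝ) {q : ℕ} (hq : 1 ≤ q) (N : ℕ) :
    ∑ n ∈ (Finset.Icc 1 N).filter (fun n => q ∣ n), f n
      = ∑ m ∈ Finset.range (N / q), f ((m+1)*q) := by
  refine Finset.sum_nbij' (fun n => n / q - 1) (fun m => (m+1)*q) ?_ ?_ ?_ ?_ ?_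
  · intro n hn
    simp only [Finset.mem_filter, Finset.mem_Icc] at hn
    obtain ⟨⟨h1, h2⟩, hdvd⟩ := hn
    have hge : 1 ≤ n / q := Nat.one_le_div_iff (by omega) |>.2 (Nat.le_of_dvd (by omega) hdvd)
    have hle : n / q ≤ N / q := Nat.div_le_div_right h2
    simp only [Finset.mem_range]
    omega
  · intro m hm
    simp only [Finset.mem_range] at hm
    simp only [Finset.mem_filter, Finset.mem_Icc]
    refine ⟨⟨by nlinarith, ?_⟩, Dvd.intro_left _ rfl⟩
    calc (m+1)*q ≤ (N/q)*q := Nat.mul_le_mul_right q (by omega)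
      _ ≤ N := Nat.div_mul_le_self N q
  · intro n hn
    simp only [Finset.mem_filter, Finset.mem_Icc] at hn
    obtain ⟨⟨h1, h2⟩, hdvd⟩ := hn
    have hge : 1 ≤ n / q := Nat.one_le_div_iff (by omega) |>.2 (Nat.le_of_dvd (by omega) hdvd)
    have : n / q * q = n := Nat.div_mul_cancel hdvd
    have hrw : n / q - 1 + 1 = n / q := by omega
    show (n / q - 1 + 1) * q = n
    rw [hrw, this]
  · intro m hm
    have h2 : (m+1)*q/q = m+1 := Nat.mul_div_cancel _ (by omega)
    show (m+1)*q/q - 1 = m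
    rw [h2]; omega
  · intro n hn
    simp only [Finset.mem_filter, Finset.mem_Icc] at hn
    obtain ⟨⟨h1, h2⟩, hdvd⟩ := hn
    have hge : 1 ≤ n / q := Nat.one_le_div_iff (by omega) |>.2 (Nat.le_of_dvd (by omega) hdvd)
    have : n / q * q = n := Nat.div_mul_cancel hdvd
    have hrw : n / q - 1 + 1 = n / q := by omega
    show f n = f ((n / q - 1 + 1) * q)
    rw [hrw, this]

/-- L1 -/
lemma sum_Icc_le_mul {ψ : ℕ → ℝ} (hψ0 : ∀ n, 0 ≤ ψ n) (hψ : Antitone ψ) {q : ℕ} (hq : 1 ≤ q)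
    (N : ℕ) : ∑ n ∈ Finset.Icc q N, ψ n ≤ (q : ℝ) * ∑ m ∈ Finset.range (N / q), ψ ((m+1)*q) := by
  set M := N / q with hM
  have hlt : N < q + M * q := by
    have h1 := Nat.div_add_mod N q
    have h2 : N % q < q := Nat.mod_lt _ (by omega)
    have h3 : M * q = q * (N / q) := by rw [hM, mul_comm]
    omega
  have hsub : Finset.Icc q N ⊆ Finset.Ico q (q + M * q) := by
    intro n hn
    simp only [Finset.mem_Icc] at hn
    simp only [Finset.mem_Ico]
    omega
  calc ∑ n ∈ Finset.Icc q N, ψ n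
      ≤ ∑ n ∈ Finset.Ico q (q + M * q), ψ n :=
        Finset.sum_le_sum_of_subset_of_nonneg hsub (fun i _ _ => hψ0 i)
    _ = ∑ m ∈ Finset.range M, ∑ n ∈ Finset.Ico (q + m*q) (q + m*q + q), ψ n :=
        sum_Ico_blocks ψ q M
    _ ≤ ∑ m ∈ Finset.range M, (q : ℝ) * ψ ((m+1)*q) := by
        refine Finset.sum_le_sum (fun m _ => ?_)
        have hcard : (Finset.Ico (q + m*q) (q + m*q + q)).card = q := by
          rw [Nat.card_Ico]; omega
        have := Finset.sum_le_card_nsmul (Finset.Ico (q + m*q) (q + m*q + q)) ψ (ψ ((m+1)*q))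
          (fun n hn => by
            refine hψ ?_
            simp only [Finset.mem_Ico] at hn
            nlinarith [hn.1])
        rw [hcard, nsmul_eq_mul] at this
        exact this
    _ = (q : ℝ) * ∑ m ∈ Finset.range M, ψ ((m+1)*q) := (Finset.mul_sum _ _ _).symm

/-- L2 -/
lemma mul_sum_le_Icc {ψ : ℕ → ℝ} (hψ0 : ∀ n, 0 ≤ ψ n) (hψ : Antitone ψ) {q : ℕ} (hq : 1 ≤ q)
    (N : ℕ) : (q : ℝ) * ∑ m ∈ Finset.range (N / q), ψ ((m+1)*q)
      ≤ (q : ℝ) * ψ q + ∑ n ∈ Finset.Icc q N, ψ n := by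
  have hsum0 : (0:ℝ) ≤ ∑ n ∈ Finset.Icc q N, ψ n :=
    Finset.sum_nonneg (fun n _ => hψ0 n)
  have hq0 : (0:ℝ) ≤ (q:ℝ) * ψ q := mul_nonneg (Nat.cast_nonneg q) (hψ0 q)
  rcases Nat.eq_zero_or_pos (N / q) with h | h
  · rw [h]; simp; linarith
  obtain ⟨M', hM'⟩ : ∃ M', N / q = M' + 1 := ⟨N / q - 1, by omega⟩
  rw [hM', Finset.sum_range_succ']
  simp only [zero_add, one_mul]
  rw [mul_add]
  have key : (q:ℝ) * ∑ m ∈ Finset.range M', ψ ((m + 1 + 1) * q) ≤ ∑ n ∈ Finset.Icc q N, ψ n := by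
    calc (q:ℝ) * ∑ m ∈ Finset.range M', ψ ((m + 1 + 1) * q)
        = ∑ m ∈ Finset.range M', (q:ℝ) * ψ ((m + 1 + 1) * q) := Finset.mul_sum _ _ _
      _ ≤ ∑ m ∈ Finset.range M', ∑ n ∈ Finset.Ico (q + m*q) (q + m*q + q), ψ n := by
          refine Finset.sum_le_sum (fun m _ => ?_)
          have hcard : (Finset.Ico (q + m*q) (q + m*q + q)).card = q := by
            rw [Nat.card_Ico]; omega
          have := Finset.card_nsmul_le_sum (Finset.Ico (q + m*q) (q + m*q + q)) ψ (ψ ((m+1+1)*q))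
            (fun n hn => by
              refine hψ ?_
              simp only [Finset.mem_Ico] at hn
              nlinarith [hn.2])
          rw [hcard, nsmul_eq_mul] at this
          exact this
      _ = ∑ n ∈ Finset.Ico q (q + M'*q), ψ n := (sum_Ico_blocks ψ q M').symm
      _ ≤ ∑ n ∈ Finset.Icc q N, ψ n := by
          refine Finset.sum_le_sum_of_subset_of_nonneg ?_ (fun i _ _ => hψ0 i)
          intro n hn
          simp only [Finset.mem_Ico] at hn
          simp only [Finset.mem_Icc]
          have hMq : (M' + 1) * q ≤ N := by
            rw [← hM']
            exact Nat.div_mul_le_self N q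
          constructor
          · exact hn.1
          · nlinarith [hn.2, hMq]
  linarith

lemma swapS (nk : ℕ → ℕ) (ψ : ℕ → ℝ) (N : ℕ) (hq : ∀ k, 1 ≤ nk k) :
    ∑ n ∈ Finset.Icc 1 N, ψ n * (∑ k ∈ Finset.range (N+1), if nk k ∣ n then (nk k : ℝ) else 0)
      = ∑ k ∈ Finset.range (N+1), (nk k : ℝ) * ∑ m ∈ Finset.range (N / nk k), ψ ((m+1) * nk k) := by
  simp_rw [Finset.mul_sum, mul_ite, mul_zero]
  rw [Finset.sum_comm]
  refine Finset.sum_congr rfl (fun k _ => ?_)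
  rw [← Finset.sum_filter]
  rw [sum_multiples (fun n => ψ n * (nk k : ℝ)) (hq k) N]
  rw [← Finset.sum_mul, mul_comm]
  exact Finset.mul_sum _ _ _

lemma S_low {nk : ℕ → ℕ} (h0 : nk 0 = 1) (hmono : StrictMono nk) {n N : ℕ}
    (hn : 1 ≤ n) (hnN : n ≤ N) :
    (dabsInv nk n : ℝ) ≤ ∑ k ∈ Finset.range (N+1), if nk k ∣ n then (nk k : ℝ) else 0 := by
  obtain ⟨κ, hκeq, hκdvd⟩ := dabsInv_mem h0 hn
  have hκmem : κ ∈ Finset.range (N+1) := by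
    simp only [Finset.mem_range]
    have := le_nk hmono κ
    have := Nat.le_of_dvd (by omega) hκdvd
    omega
  have := Finset.single_le_sum (f := fun k => if nk k ∣ n then (nk k : ℝ) else 0)
    (fun k _ => by positivity) hκmem
  simp only [hκdvd, if_true] at this
  rw [hκeq]
  exact_mod_cast this

lemma S_high {nk : ℕ → ℕ} (h0 : nk 0 = 1) (hmono : StrictMono nk)
    (hdvd : ∀ k, nk k ∣ nk (k+1)) {n N : ℕ} (hn : 1 ≤ n) :
    (∑ k ∈ Finset.range (N+1), if nk k ∣ n then (nk k : ℝ) else 0)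
      ≤ 2 * (dabsInv nk n : ℝ) := by
  obtain ⟨κ, hκeq, hκdvd⟩ := dabsInv_mem h0 hn
  have hnat : (∑ k ∈ Finset.range (N+1), if nk k ∣ n then nk k else 0) ≤ 2 * dabsInv nk n := by
    rw [← Finset.sum_filter]
    have hsub : (Finset.range (N+1)).filter (fun k => nk k ∣ n) ⊆ Finset.range (κ+1) := by
      intro k hk
      simp only [Finset.mem_filter, Finset.mem_range] at hk ⊢
      have h1 : nk k ≤ dabsInv nk n := le_dabsInv hn k hk.2
      rw [hκeq] at h1
      have := hmono.le_iff_le.mp h1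
      omega
    calc (∑ k ∈ (Finset.range (N+1)).filter (fun k => nk k ∣ n), nk k)
        ≤ ∑ k ∈ Finset.range (κ+1), nk k :=
          Finset.sum_le_sum_of_subset hsub
      _ ≤ 2 * nk κ := nk_sum_le h0 hmono hdvd κ
      _ = 2 * dabsInv nk n := by rw [hκeq]
  calc (∑ k ∈ Finset.range (N+1), if nk k ∣ n then (nk k : ℝ) else 0)
      = ((∑ k ∈ Finset.range (N+1), if nk k ∣ n then nk k else 0 : ℕ) : ℝ) := by
        push_cast
        refine Finset.sum_congr rfl (fun k _ => ?_)
        split <;> simp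
    _ ≤ 2 * (dabsInv nk n : ℝ) := by exact_mod_cast hnat

lemma swapB {nk : ℕ → ℕ} (h0 : nk 0 = 1) (hmono : StrictMono nk) (ψ : ℕ → ℝ) (N : ℕ) :
    ∑ n ∈ Finset.Icc 1 N, (Mfun nk n : ℝ) * ψ n
      = ∑ k ∈ Finset.Icc 1 N, ∑ n ∈ Finset.Icc (nk k) N, ψ n := by
  have step1 : ∀ n ∈ Finset.Icc 1 N, (Mfun nk n : ℝ) * ψ n
      = ∑ k ∈ Finset.Icc 1 N, if nk k ≤ n then ψ n else 0 := by
    intro n hn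
    simp only [Finset.mem_Icc] at hn
    rw [← Finset.sum_filter]
    have hfil : (Finset.Icc 1 N).filter (fun k => nk k ≤ n) = Finset.Icc 1 (Mfun nk n) := by
      ext k
      simp only [Finset.mem_filter, Finset.mem_Icc]
      constructor
      · rintro ⟨⟨h1, h2⟩, h3⟩
        exact ⟨h1, (Mfun_le_iff h0 hmono hn.1 k).mp h3⟩
      · rintro ⟨h1, h2⟩
        have h3 := (Mfun_le_iff h0 hmono hn.1 k).mpr h2
        have h4 : k ≤ n := (le_nk hmono k).trans h3
        exact ⟨⟨h1, h4.trans hn.2⟩, h3⟩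
    rw [hfil, Finset.sum_const, Nat.card_Icc]
    simp [nsmul_eq_mul]
  rw [Finset.sum_congr rfl step1, Finset.sum_comm]
  refine Finset.sum_congr rfl (fun k hk => ?_)
  simp only [Finset.mem_Icc] at hk
  rw [← Finset.sum_filter]
  congr 1
  ext n
  simp only [Finset.mem_filter, Finset.mem_Icc]
  constructor
  · rintro ⟨⟨h1, h2⟩, h3⟩; exact ⟨h3, h2⟩
  · rintro ⟨h1, h2⟩
    exact ⟨⟨(nk_pos h0 hmono k).trans h1, h2⟩, h1⟩

lemma keyBP {nk : ℕ → ℕ} (h0 : nk 0 = 1) (hmono : StrictMono nk)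
    (hdvd : ∀ k, nk k ∣ nk (k+1)) {ψ : ℕ → ℝ} (hψ0 : ∀ n, 0 ≤ ψ n) (hψ : Antitone ψ) (N : ℕ) :
    ∑ n ∈ Finset.Icc 1 N, (Mfun nk n : ℝ) * ψ n
      ≤ 2 * ∑ n ∈ Finset.Icc 1 N, ψ n * (dabsInv nk n : ℝ) := by
  have hq : ∀ k, 1 ≤ nk k := nk_pos h0 hmono
  rw [swapB h0 hmono ψ N]
  calc ∑ k ∈ Finset.Icc 1 N, ∑ n ∈ Finset.Icc (nk k) N, ψ n
      ≤ ∑ k ∈ Finset.Icc 1 N, (nk k : ℝ) * ∑ m ∈ Finset.range (N / nk k), ψ ((m+1) * nk k) :=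
        Finset.sum_le_sum (fun k _ => sum_Icc_le_mul hψ0 hψ (hq k) N)
    _ ≤ ∑ k ∈ Finset.range (N+1), (nk k : ℝ) * ∑ m ∈ Finset.range (N / nk k), ψ ((m+1) * nk k) := by
        refine Finset.sum_le_sum_of_subset_of_nonneg ?_ (fun k _ _ => ?_)
        · intro k hk
          simp only [Finset.mem_Icc] at hk
          simp only [Finset.mem_range]
          omega
        · exact mul_nonneg (Nat.cast_nonneg _) (Finset.sum_nonneg (fun m _ => hψ0 _))
    _ = ∑ n ∈ Finset.Icc 1 N, ψ n * (∑ k ∈ Finset.range (N+1), if nk k ∣ n then (nk k : ℝ) else 0) :=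
        (swapS nk ψ N hq).symm
    _ ≤ ∑ n ∈ Finset.Icc 1 N, 2 * (ψ n * (dabsInv nk n : ℝ)) := by
        refine Finset.sum_le_sum (fun n hn => ?_)
        simp only [Finset.mem_Icc] at hn
        have := mul_le_mul_of_nonneg_left (S_high h0 hmono hdvd (N := N) hn.1) (hψ0 n)
        linarith
    _ = 2 * ∑ n ∈ Finset.Icc 1 N, ψ n * (dabsInv nk n : ℝ) := (Finset.mul_sum _ _ _).symm

lemma sumW {nk : ℕ → ℕ} (h0 : nk 0 = 1) (hmono : StrictMono nk)
    (hdvd : ∀ k, nk k ∣ nk (k+1)) {ψ : ℕ → ℝ} (hψ0 : ∀ n, 0 ≤ ψ n) (hψ : Antitone ψ) (N : ℕ) :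
    ∑ k ∈ Finset.Icc 1 N, (if nk k ≤ N then (nk k : ℝ) * ψ (nk k) else 0)
      ≤ 2 * ∑ n ∈ Finset.Icc 1 N, ψ n := by
  set I : ℕ → Finset ℕ := fun k => if nk k ≤ N then Finset.Icc (nk k / 2) (nk k - 1) else ∅
    with hI
  have hdisj_lt : ∀ {a b : ℕ}, 1 ≤ a → a < b → Disjoint (I a) (I b) := by
    intro a b ha hab
    simp only [hI]
    split_ifs with h1 h2 h2
    · have h2ab : 2 * nk a ≤ nk b := by
        calc 2 * nk a ≤ nk (a+1) := nk_double h0 hmono hdvd a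
          _ ≤ nk b := hmono.monotone (by omega)
      rw [Finset.disjoint_left]
      intro n hna hnb
      simp only [Finset.mem_Icc] at hna hnb
      have h3 : nk a ≤ nk b / 2 := Nat.le_div_iff_mul_le (by omega) |>.2 (by omega)
      have hpa : 1 ≤ nk a := nk_pos h0 hmono a
      have h4 := hna.2
      have h5 := hnb.1
      omega
    all_goals simp
  have hdisj : (↑(Finset.Icc 1 N) : Set ℕ).PairwiseDisjoint I := by
    intro a ha b hb hab
    simp only [Finset.coe_Icc, Set.mem_Icc] at ha hb
    rcases lt_or_gt_of_ne hab with h | h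
    · exact hdisj_lt ha.1 h
    · exact (hdisj_lt hb.1 h).symm
  have h1 : ∀ k ∈ Finset.Icc 1 N, (if nk k ≤ N then (nk k : ℝ) * ψ (nk k) else 0)
      ≤ 2 * ∑ n ∈ I k, ψ n := by
    intro k hk
    simp only [Finset.mem_Icc] at hk
    simp only [hI]
    split_ifs with h
    · have hq2 : 2 ≤ nk k := nk_two h0 hmono hdvd k hk.1
      have hcard : (Finset.Icc (nk k / 2) (nk k - 1)).card = nk k - nk k / 2 := by
        rw [Nat.card_Icc]; omega
      have hsum := Finset.card_nsmul_le_sum (Finset.Icc (nk k / 2) (nk k - 1)) ψ (ψ (nk k))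
        (fun n hn => hψ (by simp only [Finset.mem_Icc] at hn; omega))
      rw [hcard, nsmul_eq_mul] at hsum
      have hle : (nk k : ℝ) ≤ 2 * ((nk k - nk k / 2 : ℕ) : ℝ) := by
        have : nk k ≤ 2 * (nk k - nk k / 2) := by omega
        exact_mod_cast this
      nlinarith [hψ0 (nk k), hsum]
    · simp
  calc ∑ k ∈ Finset.Icc 1 N, (if nk k ≤ N then (nk k : ℝ) * ψ (nk k) else 0)
      ≤ ∑ k ∈ Finset.Icc 1 N, 2 * ∑ n ∈ I k, ψ n := Finset.sum_le_sum h1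
    _ = 2 * ∑ k ∈ Finset.Icc 1 N, ∑ n ∈ I k, ψ n := (Finset.mul_sum _ _ _).symm
    _ = 2 * ∑ n ∈ (Finset.Icc 1 N).biUnion I, ψ n := by rw [Finset.sum_biUnion hdisj]
    _ ≤ 2 * ∑ n ∈ Finset.Icc 1 N, ψ n := by
        have hsub : (Finset.Icc 1 N).biUnion I ⊆ Finset.Icc 1 N := by
          intro n hn
          simp only [Finset.mem_biUnion] at hn
          obtain ⟨k, hk, hnk⟩ := hn
          simp only [Finset.mem_Icc] at hk ⊢
          simp only [hI] at hnk
          split_ifs at hnk with h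
          · simp only [Finset.mem_Icc] at hnk
            have hq2 : 2 ≤ nk k := nk_two h0 hmono hdvd k hk.1
            omega
          · simp at hnk
        have := Finset.sum_le_sum_of_subset_of_nonneg hsub (fun n _ _ => hψ0 n)
        linarith

lemma sum_Icc_one_eq (ψ : ℕ → ℝ) (N : ℕ) :
    ∑ n ∈ Finset.Icc 1 N, ψ n = ∑ m ∈ Finset.range N, ψ (m + 1) := by
  induction N with
  | zero => simp
  | succ N ih =>
    rw [Finset.sum_Icc_succ_top (by omega), Finset.sum_range_succ, ih]

lemma keyPS {nk : ℕ → ℕ} (h0 : nk 0 = 1) (hmono : StrictMono nk)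
    (hdvd : ∀ k, nk k ∣ nk (k+1)) {ψ : ℕ → ℝ} (hψ0 : ∀ n, 0 ≤ ψ n) (hψ : Antitone ψ) (N : ℕ) :
    ∑ n ∈ Finset.Icc 1 N, ψ n * (dabsInv nk n : ℝ)
      ≤ 3 * (∑ n ∈ Finset.Icc 1 N, ψ n) + ∑ n ∈ Finset.Icc 1 N, (Mfun nk n : ℝ) * ψ n := by
  have hq : ∀ k, 1 ≤ nk k := nk_pos h0 hmono
  have step1 : ∑ n ∈ Finset.Icc 1 N, ψ n * (dabsInv nk n : ℝ)
      ≤ ∑ k ∈ Finset.range (N+1), (nk k : ℝ) * ∑ m ∈ Finset.range (N / nk k), ψ ((m+1) * nk k) := by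
    rw [← swapS nk ψ N hq]
    refine Finset.sum_le_sum (fun n hn => ?_)
    simp only [Finset.mem_Icc] at hn
    exact mul_le_mul_of_nonneg_left (S_low h0 hmono hn.1 hn.2) (hψ0 n)
  have step2 : ∑ k ∈ Finset.range (N+1), (nk k : ℝ) * ∑ m ∈ Finset.range (N / nk k), ψ ((m+1) * nk k)
      = (∑ n ∈ Finset.Icc 1 N, ψ n)
        + ∑ k ∈ Finset.Icc 1 N, (nk k : ℝ) * ∑ m ∈ Finset.range (N / nk k), ψ ((m+1) * nk k) := by
    rw [Finset.range_eq_Ico, ← Finset.sum_Ico_consecutive _ (Nat.zero_le 1) (by omega : 1 ≤ N+1)]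
    congr 1
    · have h01 : Finset.Ico 0 1 = {0} := rfl
      rw [h01, Finset.sum_singleton, h0, Nat.cast_one, one_mul, Nat.div_one]
      rw [sum_Icc_one_eq]
      exact Finset.sum_congr rfl (fun m _ => by rw [mul_one])
  have step3 : ∑ k ∈ Finset.Icc 1 N, (nk k : ℝ) * ∑ m ∈ Finset.range (N / nk k), ψ ((m+1) * nk k)
      ≤ (∑ k ∈ Finset.Icc 1 N, (if nk k ≤ N then (nk k : ℝ) * ψ (nk k) else 0))
        + ∑ k ∈ Finset.Icc 1 N, ∑ n ∈ Finset.Icc (nk k) N, ψ n := by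
    rw [← Finset.sum_add_distrib]
    refine Finset.sum_le_sum (fun k hk => ?_)
    by_cases h : nk k ≤ N
    · rw [if_pos h]
      exact mul_sum_le_Icc hψ0 hψ (hq k) N
    · rw [if_neg h]
      have hdiv : N / nk k = 0 := Nat.div_eq_of_lt (by omega)
      rw [hdiv]
      simp only [Finset.range_zero, Finset.sum_empty, mul_zero, zero_add]
      exact Finset.sum_nonneg (fun n _ => hψ0 n)
  have step4 := sumW h0 hmono hdvd hψ0 hψ N
  have step5 := (swapB h0 hmono ψ N).symm
  linarith [step1, step2, step3, step4]

lemma keySB {nk : ℕ → ℕ} (h0 : nk 0 = 1) (hmono : StrictMono nk)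
    {ψ : ℕ → ℝ} (hψ0 : ∀ n, 0 ≤ ψ n) (hψ : Antitone ψ) (N : ℕ) :
    ∑ n ∈ Finset.Icc 1 N, ψ n
      ≤ (nk 1 : ℝ) * ψ 1 + ∑ n ∈ Finset.Icc 1 N, (Mfun nk n : ℝ) * ψ n := by
  have step1 : ∀ n ∈ Finset.Icc 1 N,
      ψ n ≤ (if n < nk 1 then ψ n else 0) + (Mfun nk n : ℝ) * ψ n := by
    intro n hn
    simp only [Finset.mem_Icc] at hn
    by_cases h : n < nk 1
    · rw [if_pos h]
      have : (0:ℝ) ≤ (Mfun nk n : ℝ) * ψ n := mul_nonneg (Nat.cast_nonneg _) (hψ0 n)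
      linarith
    · rw [if_neg h]
      push_neg at h
      have h1 : 1 ≤ Mfun nk n := (Mfun_le_iff h0 hmono hn.1 1).mp h
      have h2 : (1:ℝ) ≤ (Mfun nk n : ℝ) := by exact_mod_cast h1
      have := le_mul_of_one_le_left (hψ0 n) h2
      linarith
  have step2 : ∑ n ∈ Finset.Icc 1 N, (if n < nk 1 then ψ n else 0) ≤ (nk 1 : ℝ) * ψ 1 := by
    rw [← Finset.sum_filter]
    have hsub : (Finset.Icc 1 N).filter (fun n => n < nk 1) ⊆ Finset.Icc 1 (nk 1) := by
      intro n hn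
      simp only [Finset.mem_filter, Finset.mem_Icc] at hn ⊢
      omega
    have hcard : ((Finset.Icc 1 N).filter (fun n => n < nk 1)).card ≤ nk 1 := by
      have := Finset.card_le_card hsub
      rwa [Nat.card_Icc, Nat.add_sub_cancel] at this
    have hbound := Finset.sum_le_card_nsmul ((Finset.Icc 1 N).filter (fun n => n < nk 1)) ψ (ψ 1)
      (fun n hn => hψ (by simp only [Finset.mem_filter, Finset.mem_Icc] at hn; omega))
    rw [nsmul_eq_mul] at hbound
    calc ∑ n ∈ (Finset.Icc 1 N).filter (fun n => n < nk 1), ψ n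
        ≤ (((Finset.Icc 1 N).filter (fun n => n < nk 1)).card : ℝ) * ψ 1 := hbound
      _ ≤ (nk 1 : ℝ) * ψ 1 := by
          have h1 : (((Finset.Icc 1 N).filter (fun n => n < nk 1)).card : ℝ) ≤ (nk 1 : ℝ) := by
            exact_mod_cast hcard
          exact mul_le_mul_of_nonneg_right h1 (hψ0 1)
  calc ∑ n ∈ Finset.Icc 1 N, ψ n
      ≤ ∑ n ∈ Finset.Icc 1 N, ((if n < nk 1 then ψ n else 0) + (Mfun nk n : ℝ) * ψ n) :=
        Finset.sum_le_sum step1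
    _ = (∑ n ∈ Finset.Icc 1 N, (if n < nk 1 then ψ n else 0))
        + ∑ n ∈ Finset.Icc 1 N, (Mfun nk n : ℝ) * ψ n := Finset.sum_add_distrib
    _ ≤ (nk 1 : ℝ) * ψ 1 + ∑ n ∈ Finset.Icc 1 N, (Mfun nk n : ℝ) * ψ n := by linarith [step2]

lemma keyA {nk : ℕ → ℕ} (h0 : nk 0 = 1) (hmono : StrictMono nk)
    (hdvd : ∀ k, nk k ∣ nk (k+1)) {ψ : ℕ → ℝ} (hψ0 : ∀ n, 0 ≤ ψ n) (hψ : Antitone ψ) (N : ℕ) :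
    ∑ n ∈ Finset.Icc 1 N, min 1 (2 * (ψ n * (dabsInv nk n : ℝ)))
      ≤ 6 * ((nk 1 : ℝ) * ψ 1) + 8 * ∑ n ∈ Finset.Icc 1 N, (Mfun nk n : ℝ) * ψ n := by
  have h1 : ∑ n ∈ Finset.Icc 1 N, min 1 (2 * (ψ n * (dabsInv nk n : ℝ)))
      ≤ 2 * ∑ n ∈ Finset.Icc 1 N, ψ n * (dabsInv nk n : ℝ) := by
    rw [Finset.mul_sum]
    exact Finset.sum_le_sum (fun n _ => min_le_right _ _)
  have h2 := keyPS h0 hmono hdvd hψ0 hψ N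
  have h3 := keySB h0 hmono hψ0 hψ N
  have h4 := keyBP h0 hmono hdvd hψ0 hψ N
  linarith

lemma volA (n : ℕ) (hn : 0 < n) (c : ℝ) (hc : 0 ≤ c) :
    (MeasureTheory.volume {α : UnitAddCircle | ‖n • α‖ ≤ c}).toReal = min 1 (2*c) := by
  have h1 : {α : UnitAddCircle | ‖n • α‖ ≤ c}
      = (fun α : UnitAddCircle => (n:ℤ) • α) ⁻¹' Metric.closedBall 0 c := by
    ext α
    simp [Metric.mem_closedBall, dist_eq_norm, natCast_zsmul]
  rw [h1, (MeasureTheory.Measure.measurePreserving_zsmul MeasureTheory.volume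
      (by exact_mod_cast hn.ne' : (n:ℤ) ≠ 0)).measure_preimage
      (measurableSet_closedBall.nullMeasurableSet), AddCircle.volume_closedBall,
    ENNReal.toReal_ofReal (le_min zero_le_one (by linarith))]

open MeasureTheory

/-- For a pseudo-absolute value sequence `𝒟` and a non-negative decreasing `ψ`,
`∑ λ(A_n) = ∞ ⟺ ∑ ℳ(n)ψ(n) = ∞`, where
`A_n = {α ∈ ℝ/ℤ : ‖nα‖ ≤ ψ(n)/|n|_𝒟}` and `λ` is Haar (Lebesgue) probability
measure on `ℝ/ℤ`. Divergence of a series of non-negative terms is expressed by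
unboundedness of its partial sums. -/
theorem measure_sum_div_iff (nk : ℕ → ℕ) (h0 : nk 0 = 1) (hmono : StrictMono nk)
    (hdvd : ∀ k, nk k ∣ nk (k + 1)) (ψ : ℕ → ℝ) (hψ0 : ∀ n, 0 ≤ ψ n) (hψ : Antitone ψ) :
    ((∀ C : ℝ, ∃ N : ℕ, C ≤ ∑ n ∈ Finset.Icc 1 N,
        (volume {α : UnitAddCircle | ‖n • α‖ ≤ ψ n * dabsInv nk n}).toReal) ↔
     (∀ C : ℝ, ∃ N : ℕ, C ≤ ∑ n ∈ Finset.Icc 1 N, (Mfun nk n : ℝ) * ψ n)) := by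
  have hAeq : ∀ N : ℕ, (∑ n ∈ Finset.Icc 1 N,
      (volume {α : UnitAddCircle | ‖n • α‖ ≤ ψ n * dabsInv nk n}).toReal)
      = ∑ n ∈ Finset.Icc 1 N, min 1 (2 * (ψ n * (dabsInv nk n : ℝ))) := by
    intro N
    refine Finset.sum_congr rfl (fun n hn => ?_)
    simp only [Finset.mem_Icc] at hn
    exact volA n (by omega) _ (mul_nonneg (hψ0 n) (Nat.cast_nonneg _))
  have hmin0 : ∀ n : ℕ, (0:ℝ) ≤ min 1 (2 * (ψ n * (dabsInv nk n : ℝ))) := fun n =>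
    le_min zero_le_one (by have := mul_nonneg (hψ0 n) (Nat.cast_nonneg (dabsInv nk n)); linarith)
  constructor
  · intro hA C
    obtain ⟨N, hN⟩ := hA (6 * ((nk 1 : ℝ) * ψ 1) + 8 * C)
    refine ⟨N, ?_⟩
    rw [hAeq N] at hN
    have := keyA h0 hmono hdvd hψ0 hψ N
    linarith
  · intro hB
    by_contra hcon
    push_neg at hcon
    obtain ⟨C₀, hC₀⟩ := hcon
    have hC₀' : ∀ N, ∑ n ∈ Finset.Icc 1 N, min 1 (2 * (ψ n * (dabsInv nk n : ℝ))) < C₀ :=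
      fun N => hAeq N ▸ hC₀ N
    have hC₀pos : (0:ℝ) < C₀ :=
      lt_of_le_of_lt (Finset.sum_nonneg (fun n _ => hmin0 n)) (hC₀' 0)
    have hF : {n : ℕ | 1 ≤ n ∧ 1 ≤ 2 * (ψ n * (dabsInv nk n : ℝ))}.Finite := by
      by_contra hFinf
      have hInf : {n : ℕ | 1 ≤ n ∧ 1 ≤ 2 * (ψ n * (dabsInv nk n : ℝ))}.Infinite := hFinf
      obtain ⟨t, hts, htcard⟩ := hInf.exists_subset_card_eq (⌈C₀⌉₊ + 1)
      set N := t.sup id with hNdef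
      have htsub : t ⊆ Finset.Icc 1 N := by
        intro n hn
        simp only [Finset.mem_Icc]
        exact ⟨(hts hn).1, Finset.le_sup (f := id) hn⟩
      have h1 : (t.card : ℝ) ≤ ∑ n ∈ Finset.Icc 1 N, min 1 (2 * (ψ n * (dabsInv nk n : ℝ))) := by
        calc (t.card : ℝ) = ∑ _n ∈ t, (1:ℝ) := by simp
          _ ≤ ∑ n ∈ t, min 1 (2 * (ψ n * (dabsInv nk n : ℝ))) :=
              Finset.sum_le_sum (fun n hn => le_min le_rfl (hts hn).2)
          _ ≤ ∑ n ∈ Finset.Icc 1 N, min 1 (2 * (ψ n * (dabsInv nk n : ℝ))) :=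
              Finset.sum_le_sum_of_subset_of_nonneg htsub (fun n _ _ => hmin0 n)
      rw [htcard] at h1
      have h2 := hC₀' N
      have h3 : C₀ ≤ (⌈C₀⌉₊ : ℝ) := Nat.le_ceil C₀
      push_cast at h1
      linarith
    obtain ⟨n₀, hn₀⟩ := hF.bddAbove
    have hPbound : ∀ N, ∑ n ∈ Finset.Icc 1 N, ψ n * (dabsInv nk n : ℝ)
        ≤ (∑ n ∈ Finset.Icc 1 n₀, ψ n * (dabsInv nk n : ℝ))
          + ∑ n ∈ Finset.Icc 1 N, min 1 (2 * (ψ n * (dabsInv nk n : ℝ))) := by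
      intro N
      have term : ∀ n ∈ Finset.Icc 1 N, ψ n * (dabsInv nk n : ℝ)
          ≤ (if n ≤ n₀ then ψ n * (dabsInv nk n : ℝ) else 0)
            + min 1 (2 * (ψ n * (dabsInv nk n : ℝ))) := by
        intro n hn
        simp only [Finset.mem_Icc] at hn
        by_cases h : n ≤ n₀
        · rw [if_pos h]
          have := hmin0 n
          linarith
        · rw [if_neg h]
          have hnF : n ∉ {n : ℕ | 1 ≤ n ∧ 1 ≤ 2 * (ψ n * (dabsInv nk n : ℝ))} := by
            intro hmem
            exact h (hn₀ hmem)
          simp only [Set.mem_setOf_eq, not_and, not_le] at hnF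
          have hlt := hnF hn.1
          have hmin : min 1 (2 * (ψ n * (dabsInv nk n : ℝ))) = 2 * (ψ n * (dabsInv nk n : ℝ)) :=
            min_eq_right hlt.le
          have hpos : (0:ℝ) ≤ ψ n * (dabsInv nk n : ℝ) :=
            mul_nonneg (hψ0 n) (Nat.cast_nonneg _)
          rw [hmin]
          linarith
      calc ∑ n ∈ Finset.Icc 1 N, ψ n * (dabsInv nk n : ℝ)
          ≤ ∑ n ∈ Finset.Icc 1 N, ((if n ≤ n₀ then ψ n * (dabsInv nk n : ℝ) else 0)
            + min 1 (2 * (ψ n * (dabsInv nk n : ℝ)))) := Finset.sum_le_sum term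
        _ = (∑ n ∈ Finset.Icc 1 N, (if n ≤ n₀ then ψ n * (dabsInv nk n : ℝ) else 0))
            + ∑ n ∈ Finset.Icc 1 N, min 1 (2 * (ψ n * (dabsInv nk n : ℝ))) :=
            Finset.sum_add_distrib
        _ ≤ (∑ n ∈ Finset.Icc 1 n₀, ψ n * (dabsInv nk n : ℝ))
            + ∑ n ∈ Finset.Icc 1 N, min 1 (2 * (ψ n * (dabsInv nk n : ℝ))) := by
            have : ∑ n ∈ Finset.Icc 1 N, (if n ≤ n₀ then ψ n * (dabsInv nk n : ℝ) else 0)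
                ≤ ∑ n ∈ Finset.Icc 1 n₀, ψ n * (dabsInv nk n : ℝ) := by
              rw [← Finset.sum_filter]
              refine Finset.sum_le_sum_of_subset_of_nonneg ?_
                (fun n _ _ => mul_nonneg (hψ0 n) (Nat.cast_nonneg _))
              intro n hn
              simp only [Finset.mem_filter, Finset.mem_Icc] at hn ⊢
              omega
            linarith
    obtain ⟨N, hN⟩ := hB (2 * (∑ n ∈ Finset.Icc 1 n₀, ψ n * (dabsInv nk n : ℝ)) + 2 * C₀)
    have h1 := keyBP h0 hmono hdvd hψ0 hψ N
    have h2 := hPbound N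
    have h3 := hC₀' N
    linarith
end

section
/- For all N ∈ ℕ, |∑_{n=1}^N φ(n)/n − (6/π²)·N| ≤ C·log(N+1) for some absolute constant C > 0, where φ is the Euler totient function. -/
set_option maxHeartbeats 1000000

open Finset ArithmeticFunction
open scoped ArithmeticFunction.Moebius
open scoped LSeries.notation

lemma phi_div (n : ℕ) (hn : 0 < n) :
    (Nat.totient n : ℝ) / n = ∑ d ∈ n.divisors, (μ d : ℝ) / d := by
  have h := (ArithmeticFunction.sum_eq_iff_sum_mul_moebius_eq (R := ℝ)
      (f := fun i => (Nat.totient i : ℝ)) (g := fun i => (i : ℝ))).mp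
      (fun m hm => by exact_mod_cast congrArg (Nat.cast (R := ℝ)) (Nat.sum_totient m)) n hn
  rw [Nat.sum_divisorsAntidiagonal (f := fun d e => (μ d : ℝ) * e)] at h
  rw [← h, Finset.sum_div]
  refine Finset.sum_congr rfl fun d hd => ?_
  obtain ⟨hdvd, hn0⟩ := Nat.mem_divisors.mp hd
  have hd0 : d ≠ 0 := fun h0 => hn0 (by simpa [h0] using hdvd)
  rw [Nat.cast_div hdvd (by exact_mod_cast hd0)]
  field_simp

lemma swap_sum (N : ℕ) (f : ℕ → ℝ) :
    ∑ n ∈ Finset.Icc 1 N, ∑ d ∈ n.divisors, f d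
      = ∑ d ∈ Finset.Icc 1 N, (N / d : ℕ) * f d := by
  have hIcc : Finset.Icc 1 N = Finset.Ioc 0 N := rfl
  have key : ∀ n ∈ Finset.Icc 1 N, n.divisors = {d ∈ Finset.Icc 1 N | d ∣ n} := by
    intro n hn
    rw [Finset.mem_Icc] at hn
    ext d
    simp only [Nat.mem_divisors, Finset.mem_filter, Finset.mem_Icc]
    constructor
    · intro ⟨hd, hn0⟩
      exact ⟨⟨Nat.one_le_iff_ne_zero.mpr fun h0 => hn0 (by simpa [h0] using hd),
        (Nat.le_of_dvd (Nat.lt_of_lt_of_le Nat.zero_lt_one hn.1) hd).trans hn.2⟩, hd⟩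
    · intro ⟨_, hd⟩
      exact ⟨hd, Nat.one_le_iff_ne_zero.mp hn.1⟩
  calc ∑ n ∈ Finset.Icc 1 N, ∑ d ∈ n.divisors, f d
      = ∑ n ∈ Finset.Icc 1 N, ∑ d ∈ Finset.Icc 1 N, if d ∣ n then f d else 0 := by
        refine Finset.sum_congr rfl fun n hn => ?_
        rw [key n hn, Finset.sum_filter]
    _ = ∑ d ∈ Finset.Icc 1 N, ∑ n ∈ Finset.Icc 1 N, if d ∣ n then f d else 0 :=
        Finset.sum_comm
    _ = ∑ d ∈ Finset.Icc 1 N, (N / d : ℕ) * f d := by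
        refine Finset.sum_congr rfl fun d hd => ?_
        rw [← Finset.sum_filter, Finset.sum_const, hIcc,
          Nat.Ioc_filter_dvd_card_eq_div, nsmul_eq_mul]

lemma moebius_hasSum : HasSum (fun d : ℕ => (μ d : ℝ) / (d : ℝ) ^ 2) (6 / Real.pi ^ 2) := by
  have hs : (1 : ℝ) < (2 : ℂ).re := by norm_num
  have hsum : LSeriesSummable ↗μ 2 := LSeriesSummable_moebius_iff.mpr hs
  have hL : LSeries ↗μ 2 = 6 / (Real.pi : ℂ) ^ 2 := by
    have h1 := LSeries_zeta_mul_Lseries_moebius hs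
    rw [LSeries_zeta_eq_riemannZeta hs] at h1
    rw [show LSeries ↗μ 2 = (riemannZeta 2)⁻¹ from eq_inv_of_mul_eq_one_right h1,
      riemannZeta_two, inv_div]
  have hterm : ∀ n : ℕ, LSeries.term ↗μ 2 n = ((↑((μ n : ℝ) / (n : ℝ) ^ 2) : ℂ)) := by
    intro n
    rcases eq_or_ne n 0 with rfl | hn
    · simp [LSeries.term_zero]
    · rw [LSeries.term_of_ne_zero hn]
      rw [show ((n : ℂ) ^ (2 : ℂ)) = (n : ℂ) ^ (2 : ℕ) by
        rw [show (2 : ℂ) = ((2 : ℕ) : ℂ) by norm_num, Complex.cpow_natCast]]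
      push_cast
      rfl
  have h : HasSum (LSeries.term ↗μ 2) (LSeries ↗μ 2) := hsum.hasSum
  rw [hL, funext hterm] at h
  have : ((6 / (Real.pi : ℂ) ^ 2)) = ((6 / Real.pi ^ 2 : ℝ) : ℂ) := by push_cast; ring
  rw [this] at h
  exact Complex.hasSum_ofReal.mp h

lemma tail_bound (N : ℕ) (hN : 0 < N) :
    |(6 / Real.pi ^ 2) - ∑ d ∈ Finset.Icc 1 N, (μ d : ℝ) / (d : ℝ) ^ 2| ≤ 1 / (N : ℝ) := by
  set g : ℕ → ℝ := fun d => (μ d : ℝ) / (d : ℝ) ^ 2 with hg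
  have hg0 : g 0 = 0 := by simp [hg]
  have hpart : ∑ d ∈ Finset.Icc 1 N, g d = ∑ d ∈ Finset.range (N + 1), g d := by
    have : Finset.range (N + 1) = insert 0 (Finset.Icc 1 N) := by
      ext x; simp [Nat.lt_succ_iff, Nat.one_le_iff_ne_zero]; omega
    rw [this, Finset.sum_insert (by simp), hg0, zero_add]
  have hsummable := moebius_hasSum.summable
  have htail := Summable.sum_add_tsum_nat_add (f := g) (N + 1) hsummable
  rw [moebius_hasSum.tsum_eq] at htail
  have heq : (6 / Real.pi ^ 2) - ∑ d ∈ Finset.Icc 1 N, g d = ∑' i, g (i + (N + 1)) := by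
    rw [hpart]; linarith [htail]
  rw [heq]
  have hcomp : Summable (fun i : ℕ => (((i + (N + 1) : ℕ) : ℝ) ^ 2)⁻¹) := by
    have := (Real.summable_one_div_nat_pow (p := 2)).mpr one_lt_two
    simp only [one_div] at this
    exact (summable_nat_add_iff (f := fun n : ℕ => ((n : ℝ) ^ 2)⁻¹) (N + 1)).mpr this
  have habs : ∀ i : ℕ, |g (i + (N + 1))| ≤ (((i + (N + 1) : ℕ) : ℝ) ^ 2)⁻¹ := by
    intro i
    rw [hg, abs_div, abs_pow, Nat.abs_cast]
    rw [div_le_iff₀ (by positivity)]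
    rw [inv_mul_cancel₀ (by positivity)]
    have : |μ (i + (N + 1))| ≤ 1 := abs_moebius_le_one
    exact_mod_cast (by exact_mod_cast this : |((μ (i + (N + 1)) : ℤ) : ℝ)| ≤ 1)
  have habs2 : Summable (fun i : ℕ => |g (i + (N + 1))|) :=
    Summable.of_nonneg_of_le (fun i => abs_nonneg _) habs hcomp
  calc |∑' i, g (i + (N + 1))|
      ≤ ∑' i, |g (i + (N + 1))| := by
        have habs2' : Summable (fun i => ‖g (i + (N + 1))‖) := by
          simpa only [Real.norm_eq_abs] using habs2
        simpa only [Real.norm_eq_abs] using norm_tsum_le_tsum_norm habs2' 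
    _ ≤ ∑' i : ℕ, (((i + (N + 1) : ℕ) : ℝ) ^ 2)⁻¹ := habs2.tsum_le_tsum habs hcomp
    _ ≤ 1 / N := by
        refine Real.tsum_le_of_sum_range_le (fun i => by positivity) fun n => ?_
        have hre : ∑ i ∈ Finset.range n, (((i + (N + 1) : ℕ) : ℝ) ^ 2)⁻¹
            = ∑ j ∈ Finset.Ioc N (N + n), ((j : ℝ) ^ 2)⁻¹ := by
          rw [← Finset.Icc_add_one_left_eq_Ioc, ← Finset.Ico_add_one_right_eq_Icc, Finset.sum_Ico_eq_sum_range]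
          refine Finset.sum_congr (by congr 1; omega) fun i _ => ?_
          rw [add_comm (N + 1) i]
        rw [hre]
        rcases Nat.eq_zero_or_pos n with rfl | hn
        · rw [Nat.add_zero, Finset.Ioc_self, Finset.sum_empty]; positivity
        calc ∑ j ∈ Finset.Ioc N (N + n), ((j : ℝ) ^ 2)⁻¹
            ≤ (N : ℝ)⁻¹ - ((N + n : ℕ) : ℝ)⁻¹ :=
              sum_Ioc_inv_sq_le_sub (by omega) (by omega)
          _ ≤ 1 / N := by rw [one_div]; have : (0:ℝ) ≤ ((N + n : ℕ) : ℝ)⁻¹ := by positivity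
                          linarith

/-- There is an absolute constant `C > 0` with
`|∑_{n=1}^N φ(n)/n − (6/π²)·N| ≤ C·log(N+1)` for all `N ∈ ℕ`. -/
theorem totient_over_n_sum_asymp :
    ∃ C : ℝ, 0 < C ∧ ∀ N : ℕ,
      |(∑ n ∈ Finset.Icc 1 N, (Nat.totient n : ℝ) / n) - (6 / Real.pi ^ 2) * N| ≤
        C * Real.log (N + 1) := by
  refine ⟨4, by norm_num, fun N => ?_⟩
  rcases Nat.eq_zero_or_pos N with rfl | hN
  · simp
  -- rewrite the sum
  have h1 : ∑ n ∈ Finset.Icc 1 N, (Nat.totient n : ℝ) / n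
      = ∑ d ∈ Finset.Icc 1 N, (N / d : ℕ) * ((μ d : ℝ) / d) := by
    rw [← swap_sum]
    refine Finset.sum_congr rfl fun n hn => ?_
    exact phi_div n (Finset.mem_Icc.mp hn).1
  set A := ∑ d ∈ Finset.Icc 1 N, (μ d : ℝ) / (d : ℝ) ^ 2 with hA
  have hdecomp : (∑ n ∈ Finset.Icc 1 N, (Nat.totient n : ℝ) / n) - (6 / Real.pi ^ 2) * N
      = (∑ d ∈ Finset.Icc 1 N, ((μ d : ℝ) / d) * (((N / d : ℕ) : ℝ) - (N : ℝ) / d))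
        - (N : ℝ) * ((6 / Real.pi ^ 2) - A) := by
    have key : ∀ d ∈ Finset.Icc 1 N, ((N / d : ℕ) : ℝ) * ((μ d : ℝ) / d)
        = ((μ d : ℝ) / d) * (((N / d : ℕ) : ℝ) - (N : ℝ) / d)
          + (N : ℝ) * ((μ d : ℝ) / (d : ℝ) ^ 2) := by
      intro d hd
      have hd1 : 1 ≤ d := (Finset.mem_Icc.mp hd).1
      have hd0 : (d : ℝ) ≠ 0 := by
        have : (0 : ℝ) < d := by exact_mod_cast hd1
        positivity
      field_simp
      ring
    rw [h1, Finset.sum_congr rfl key, Finset.sum_add_distrib, ← Finset.mul_sum, ← hA]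
    ring
  rw [hdecomp]
  have hterm1 : |∑ d ∈ Finset.Icc 1 N, ((μ d : ℝ) / d) * (((N / d : ℕ) : ℝ) - (N : ℝ) / d)|
      ≤ 1 + Real.log N := by
    calc |∑ d ∈ Finset.Icc 1 N, ((μ d : ℝ) / d) * (((N / d : ℕ) : ℝ) - (N : ℝ) / d)|
        ≤ ∑ d ∈ Finset.Icc 1 N, |((μ d : ℝ) / d) * (((N / d : ℕ) : ℝ) - (N : ℝ) / d)| :=
          Finset.abs_sum_le_sum_abs _ _
      _ ≤ ∑ d ∈ Finset.Icc 1 N, (d : ℝ)⁻¹ := by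
          refine Finset.sum_le_sum fun d hd => ?_
          have hd1 : 1 ≤ d := (Finset.mem_Icc.mp hd).1
          have hd0 : (0 : ℝ) < d := by exact_mod_cast hd1
          rw [abs_mul, abs_div, Nat.abs_cast]
          have hmu : |(μ d : ℝ)| ≤ 1 := by
            exact_mod_cast (by exact_mod_cast abs_moebius_le_one : |((μ d : ℤ) : ℝ)| ≤ 1)
          have hfrac : |(((N / d : ℕ) : ℝ) - (N : ℝ) / d)| ≤ 1 := by
            rw [abs_le]
            constructor
            · have : (N : ℝ) / d < ((N / d : ℕ) : ℝ) + 1 := by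
                rw [div_lt_iff₀ hd0]
                exact_mod_cast (Nat.div_lt_iff_lt_mul (by omega)).mp (Nat.lt_succ_self (N / d))
              linarith
            · have : ((N / d : ℕ) : ℝ) ≤ (N : ℝ) / d := by
                rw [le_div_iff₀ hd0]
                exact_mod_cast Nat.div_mul_le_self N d
              linarith
          calc |(μ d : ℝ)| / d * |(((N / d : ℕ) : ℝ) - (N : ℝ) / d)|
              ≤ 1 / d * 1 := by
                apply mul_le_mul (by gcongr) hfrac (abs_nonneg _) (by positivity)
            _ = (d : ℝ)⁻¹ := by rw [mul_one, one_div]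
      _ = (harmonic N : ℝ) := by
          rw [harmonic_eq_sum_Icc]
          push_cast
          rfl
      _ ≤ 1 + Real.log N := harmonic_le_one_add_log N
  have hterm2 : |(N : ℝ) * ((6 / Real.pi ^ 2) - A)| ≤ 1 := by
    rw [abs_mul, Nat.abs_cast]
    calc (N : ℝ) * |(6 / Real.pi ^ 2) - A| ≤ (N : ℝ) * (1 / N) := by
          gcongr
          exact tail_bound N hN
      _ = 1 := by
          field_simp
  have hlog : Real.log N ≤ Real.log (N + 1) := by
    apply Real.log_le_log (by exact_mod_cast hN)
    linarith
  have hlog2 : Real.log 2 ≤ Real.log (N + 1) := by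
    apply Real.log_le_log (by norm_num)
    have : (1 : ℝ) ≤ N := by exact_mod_cast hN
    linarith
  have h2 : (2 : ℝ) ≤ 3 * Real.log (N + 1) := by
    nlinarith [Real.log_two_gt_d9]
  calc |(∑ d ∈ Finset.Icc 1 N, ((μ d : ℝ) / d) * (((N / d : ℕ) : ℝ) - (N : ℝ) / d))
        - (N : ℝ) * ((6 / Real.pi ^ 2) - A)|
      ≤ (1 + Real.log N) + 1 := by
        refine (abs_sub _ _).trans ?_
        gcongr
    _ ≤ 4 * Real.log (N + 1) := by nlinarith
end

section
/- Let n_k = ∏_{p ≤ 2^{k²}} p (the product over primes up to 2^{k²}). Then {n_k}_{k≥0} is a pseudo-absolute value sequence and ∑_{k=1}^∞ φ(n_k)/n_k < ∞, where φ is the Euler totient function. -/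
open Finset

lemma key (N : ℕ) : ∑ n ∈ Finset.Icc 1 N, ((n : ℝ))⁻¹ ≤
    ∏ p ∈ Nat.primesBelow (N + 1), (1 - (p : ℝ)⁻¹)⁻¹ := by
  classical
  set s := Nat.primesBelow (N + 1) with hs
  set t : ℕ → Finset ℕ := fun _ => Finset.range (N + 1) with ht
  set F : ℕ → ((p : ℕ) → p ∈ s → ℕ) := fun n p _ => n.factorization p with hF
  set H : ((p : ℕ) → p ∈ s → ℕ) → ℝ :=
    fun g => ∏ x ∈ s.attach, ((x.1 : ℝ)⁻¹) ^ (g x.1 x.2) with hH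
  have hprime : ∀ p ∈ s, p.Prime := fun p hp => Nat.prime_of_mem_primesBelow hp
  have hfac0 : ∀ m : ℕ, m ≤ N → ∀ p ∉ s, m.factorization p = 0 := by
    intro m h2 p hp
    by_contra h
    have hpm : p ∈ m.primeFactors := by
      rw [← Nat.support_factorization]
      exact Finsupp.mem_support_iff.mpr h
    obtain ⟨hp1, hp2, hm0⟩ := Nat.mem_primeFactors.mp hpm
    exact hp (Nat.mem_primesBelow.mpr ⟨by have := Nat.le_of_dvd (Nat.pos_of_ne_zero hm0) hp2; omega, hp1⟩)
  have step0 : ∀ n ∈ Finset.Icc 1 N, H (F n) = (n : ℝ)⁻¹ := by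
    intro n hn
    rw [Finset.mem_Icc] at hn
    have hne : n ≠ 0 := by omega
    have key : (n : ℝ) = ∏ x ∈ s.attach, ((x.1 : ℝ)) ^ (n.factorization x.1) := by
      rw [Finset.prod_attach s (fun p => ((p:ℝ)) ^ (n.factorization p))]
      have h1 : ∏ p ∈ s, ((p:ℝ)) ^ (n.factorization p)
          = ∏ p ∈ n.primeFactors, ((p:ℝ)) ^ (n.factorization p) := by
        refine (Finset.prod_subset ?_ ?_).symm
        · intro p hp
          obtain ⟨hp1, hp2, -⟩ := Nat.mem_primeFactors.mp hp
          exact Nat.mem_primesBelow.mpr ⟨by have := Nat.le_of_dvd (by omega) hp2; omega, hp1⟩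
        · intro p _ hp
          rw [← Nat.support_factorization] at hp
          rw [Finsupp.notMem_support_iff.mp hp, pow_zero]
      rw [h1]
      have h2 := Nat.factorization_prod_pow_eq_self hne
      rw [Finsupp.prod] at h2
      rw [Nat.support_factorization] at h2
      conv_lhs => rw [← h2]
      push_cast
      rfl
    rw [hH]
    simp only [hF]
    rw [key, ← Finset.prod_inv_distrib]
    exact Finset.prod_congr rfl fun x _ => inv_pow _ _
  -- injectivity
  have hinj : ∀ a ∈ Finset.Icc 1 N, ∀ b ∈ Finset.Icc 1 N, F a = F b → a = b := by
    intro a ha b hb hab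
    rw [Finset.mem_Icc] at ha hb
    refine Nat.eq_of_factorization_eq (by omega) (by omega) fun p => ?_
    by_cases hp : p ∈ s
    · exact congrFun (congrFun hab p) hp
    · rw [hfac0 a ha.2 p hp, hfac0 b hb.2 p hp]
  -- image lands in s.pi t
  have himg : ∀ n ∈ Finset.Icc 1 N, F n ∈ s.pi t := by
    intro n hn
    rw [Finset.mem_Icc] at hn
    refine Finset.mem_pi.mpr fun p hp => ?_
    simp only [hF, ht]
    exact Finset.mem_range.mpr (by have := Nat.factorization_lt p (show n ≠ 0 by omega); omega)
  have step1 : ∑ n ∈ Finset.Icc 1 N, ((n : ℝ))⁻¹ ≤ ∑ g ∈ s.pi t, H g := by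
    rw [← Finset.sum_congr rfl step0, ← Finset.sum_image hinj]
    refine Finset.sum_le_sum_of_subset_of_nonneg ?_ ?_
    · intro g hg
      obtain ⟨n, hn, rfl⟩ := Finset.mem_image.mp hg
      exact himg n hn
    · intro g _ _
      exact Finset.prod_nonneg fun x _ => pow_nonneg (by positivity) _
  have step2 : ∑ g ∈ s.pi t, H g = ∏ p ∈ s, ∑ e ∈ Finset.range (N + 1), ((p : ℝ)⁻¹) ^ e := by
    rw [Finset.prod_sum]
  refine step1.trans (step2.le.trans ?_)
  refine Finset.prod_le_prod (fun p _ => Finset.sum_nonneg fun e _ => pow_nonneg (by positivity) _)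
    (fun p hp => ?_)
  have h2 : (2 : ℕ) ≤ p := (hprime p hp).two_le
  have h0 : (0:ℝ) ≤ (p:ℝ)⁻¹ := by positivity
  have h1 : (p:ℝ)⁻¹ < 1 := by
    rw [inv_lt_one_iff₀]
    right; exact_mod_cast by omega
  calc ∑ e ∈ Finset.range (N + 1), ((p : ℝ)⁻¹) ^ e
      ≤ ∑' e : ℕ, ((p : ℝ)⁻¹) ^ e :=
        Summable.sum_le_tsum _ (fun e _ => pow_nonneg h0 _) (summable_geometric_of_lt_one h0 h1)
    _ = (1 - (p:ℝ)⁻¹)⁻¹ := tsum_geometric_of_lt_one h0 h1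


/-- The primorial-type sequence `n_k = ∏_{p ≤ 2^{k²}} p`. -/
def primorialSeq (k : ℕ) : ℕ := ∏ p ∈ Nat.primesBelow (2 ^ (k ^ 2) + 1), p

lemma primorialSeq_pos (k : ℕ) : 0 < primorialSeq k :=
  Finset.prod_pos fun p hp => (Nat.prime_of_mem_primesBelow hp).pos

lemma primeFactors_primorialSeq (k : ℕ) :
    (primorialSeq k).primeFactors = Nat.primesBelow (2 ^ (k ^ 2) + 1) :=
  Nat.primeFactors_prod fun p hp => Nat.prime_of_mem_primesBelow hp

lemma ratio_eq (k : ℕ) : (Nat.totient (primorialSeq k) : ℝ) / primorialSeq k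
    = ∏ p ∈ Nat.primesBelow (2 ^ (k ^ 2) + 1), (1 - (p : ℝ)⁻¹) := by
  have h := Nat.totient_eq_mul_prod_factors (primorialSeq k)
  have h' := congrArg (fun q : ℚ => (q : ℝ)) h
  simp only [Rat.cast_mul, Rat.cast_natCast, Rat.cast_prod, Rat.cast_sub, Rat.cast_one,
    Rat.cast_inv] at h'
  rw [primeFactors_primorialSeq] at h'
  rw [h']
  rw [mul_comm, mul_div_assoc, div_self (by exact_mod_cast (primorialSeq_pos k).ne'), mul_one]

lemma ratio_le (k : ℕ) (hk : 1 ≤ k) : (Nat.totient (primorialSeq k) : ℝ) / primorialSeq k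
    ≤ ((k : ℝ) ^ 2 * Real.log 2)⁻¹ := by
  set N := 2 ^ (k ^ 2) with hN
  have hN1 : 1 ≤ N := Nat.one_le_two_pow
  rw [ratio_eq]
  set P := ∏ p ∈ Nat.primesBelow (N + 1), (1 - (p : ℝ)⁻¹) with hP
  have hfac : ∀ p ∈ Nat.primesBelow (N + 1), (0:ℝ) < 1 - (p : ℝ)⁻¹ := by
    intro p hp
    have h2 : (2 : ℕ) ≤ p := (Nat.prime_of_mem_primesBelow hp).two_le
    have : (p:ℝ)⁻¹ < 1 := by
      rw [inv_lt_one_iff₀]; right; exact_mod_cast by omega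
    linarith
  have hPpos : 0 < P := Finset.prod_pos hfac
  set S := ∑ n ∈ Finset.Icc 1 N, ((n : ℝ))⁻¹ with hS
  have hkey : S ≤ P⁻¹ := by
    have h := key N
    calc S ≤ ∏ p ∈ Nat.primesBelow (N + 1), (1 - (p : ℝ)⁻¹)⁻¹ := h
      _ = P⁻¹ := Finset.prod_inv_distrib _
  have hlog : (k : ℝ) ^ 2 * Real.log 2 ≤ S := by
    have h1 : Real.log (N + 1) ≤ S := by
      have := log_add_one_le_harmonic N
      rw [harmonic_eq_sum_Icc] at this
      push_cast at this ⊢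
      convert this using 2
    have h2 : (k : ℝ) ^ 2 * Real.log 2 ≤ Real.log (N + 1) := by
      have : (k : ℝ) ^ 2 * Real.log 2 = Real.log (N : ℝ) := by
        rw [hN]; push_cast
        rw [Real.log_pow]; push_cast; ring
      rw [this]
      apply Real.log_le_log (by positivity)
      push_cast; linarith
    linarith
  have hSpos : 0 < S := lt_of_lt_of_le (by positivity) hlog
  calc P ≤ S⁻¹ := by
        rw [← inv_inv P]
        exact inv_anti₀ hSpos hkey  -- check name
    _ ≤ ((k : ℝ) ^ 2 * Real.log 2)⁻¹ :=
        inv_anti₀ (by positivity) hlog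

lemma primorialSeq_dvd (k : ℕ) : primorialSeq k ∣ primorialSeq (k + 1) := by
  apply Finset.prod_dvd_prod_of_subset
  intro p hp
  rw [Nat.mem_primesBelow] at *
  refine ⟨lt_of_lt_of_le hp.1 ?_, hp.2⟩
  have : (2:ℕ) ^ (k ^ 2) ≤ 2 ^ ((k+1) ^ 2) := Nat.pow_le_pow_right (by norm_num) (by nlinarith [sq_nonneg k, Nat.zero_le k])
  omega

lemma primorialSeq_strictMono : StrictMono primorialSeq := by
  apply strictMono_nat_of_lt_succ
  intro k
  obtain ⟨p, hp, hlt, hle⟩ := Nat.exists_prime_lt_and_le_two_mul (2 ^ (k ^ 2)) (by positivity)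
  have hps : p ∈ Nat.primesBelow (2 ^ ((k+1) ^ 2) + 1) := by
    rw [Nat.mem_primesBelow]
    refine ⟨?_, hp⟩
    have h1 : 2 * 2 ^ (k ^ 2) = 2 ^ (k ^ 2 + 1) := by ring
    have h2 : (2:ℕ) ^ (k ^ 2 + 1) ≤ 2 ^ ((k+1) ^ 2) :=
      Nat.pow_le_pow_right (by norm_num) (by nlinarith [sq_nonneg k, Nat.zero_le k])
    omega
  have hpd : p ∣ primorialSeq (k + 1) := Finset.dvd_prod_of_mem _ hps
  have hpnd : ¬ p ∣ primorialSeq k := by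
    intro h
    obtain ⟨q, hq, hpq⟩ := (Nat.Prime.prime hp).exists_mem_finset_dvd h
    have hq2 := Nat.lt_of_mem_primesBelow hq
    have := ((Nat.prime_dvd_prime_iff_eq hp (Nat.prime_of_mem_primesBelow hq)).mp hpq)
    omega
  refine lt_of_le_of_ne (Nat.le_of_dvd (primorialSeq_pos _) (primorialSeq_dvd k)) ?_
  intro h
  rw [h] at hpnd
  exact hpnd hpd

/-- The sequence `n_k = ∏_{p ≤ 2^{k²}} p` is a pseudo-absolute value sequence
(strictly increasing, `n_0 = 1`, `n_k ∣ n_{k+1}`) for which `∑ φ(n_k)/n_k < ∞`. -/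
theorem primorial_seq_fails_condition :
    primorialSeq 0 = 1 ∧ StrictMono primorialSeq ∧
    (∀ k, primorialSeq k ∣ primorialSeq (k + 1)) ∧
    Summable (fun k : ℕ => (Nat.totient (primorialSeq k) : ℝ) / primorialSeq k) := by
  refine ⟨by decide, primorialSeq_strictMono, primorialSeq_dvd, ?_⟩
  rw [← summable_nat_add_iff 1]
  have hsum : Summable (fun k : ℕ => ((((k:ℝ) + 1) ^ 2)⁻¹ * (Real.log 2)⁻¹)) := by
    have h1 : Summable (fun k : ℕ => (((k:ℝ) + 1) ^ 2)⁻¹) := by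
      have := Real.summable_one_div_nat_pow.mpr (show 1 < 2 by norm_num)
      have h2 := (summable_nat_add_iff 1).mpr this
      simpa [one_div] using h2
    exact h1.mul_right _
  refine Summable.of_nonneg_of_le (fun k => ?_) (fun k => ?_) hsum
  · positivity
  · have := ratio_le (k + 1) (by omega)
    calc (Nat.totient (primorialSeq (k+1)) : ℝ) / primorialSeq (k+1)
        ≤ (((k+1 : ℕ) : ℝ) ^ 2 * Real.log 2)⁻¹ := this
      _ = (((k:ℝ) + 1) ^ 2)⁻¹ * (Real.log 2)⁻¹ := by
          rw [mul_inv]; push_cast; ring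
end

section
/- Let ψ : ℕ → ℝ be non-negative and decreasing, 𝒟 a pseudo-absolute value sequence, and suppose there exists an infinite increasing sequence {m_i} with ψ(m_i)/|m_i|_𝒟 ≥ 1/2 for all i. Then ∑_{n=1}^∞ ℳ(n)ψ(n) = ∞. -/
lemma Mfun_ge (nk : ℕ → ℕ) (hmono : StrictMono nk) {k n : ℕ} (h : nk k ≤ n) :
    k ≤ Mfun nk n := by
  apply le_csSup
  · exact ⟨n, fun j hj => le_trans hmono.le_apply hj⟩
  · exact h

lemma dabsInv_spec (nk : ℕ → ℕ) (h0 : nk 0 = 1) {n : ℕ} (hn : 1 ≤ n) :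
    ∃ k, dabsInv nk n = nk k ∧ nk k ∣ n := by
  have hmem : dabsInv nk n ∈ {d : ℕ | ∃ k, d = nk k ∧ nk k ∣ n} := by
    apply Nat.sSup_mem
    · exact ⟨1, 0, h0.symm, by simp [h0]⟩
    · exact ⟨n, fun d ⟨k, hd, hdvd⟩ => Nat.le_of_dvd hn (hd ▸ hdvd)⟩
  exact hmem

lemma sum_lower (nk : ℕ → ℕ) (hmono : StrictMono nk) (ψ : ℕ → ℝ) (hψ0 : ∀ n, 0 ≤ ψ n)
    (hψ : Antitone ψ) {k a N : ℕ} (ha : nk k ≤ a) (h1 : 1 ≤ a) (haN : a ≤ N) :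
    ((N - a + 1 : ℕ) : ℝ) * k * ψ N ≤ ∑ n ∈ Finset.Icc 1 N, (Mfun nk n : ℝ) * ψ n := by
  have hsub : ∑ n ∈ Finset.Icc a N, (Mfun nk n : ℝ) * ψ n
      ≤ ∑ n ∈ Finset.Icc 1 N, (Mfun nk n : ℝ) * ψ n := by
    apply Finset.sum_le_sum_of_subset_of_nonneg
    · intro x hx
      simp only [Finset.mem_Icc] at *
      omega
    · intro i _ _
      have := hψ0 i
      positivity
  refine le_trans ?_ hsub
  have hterm : ∀ n ∈ Finset.Icc a N, (k : ℝ) * ψ N ≤ (Mfun nk n : ℝ) * ψ n := by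
    intro n hn
    simp only [Finset.mem_Icc] at hn
    have hM : k ≤ Mfun nk n := Mfun_ge nk hmono (le_trans ha hn.1)
    exact mul_le_mul (by exact_mod_cast hM) (hψ hn.2) (hψ0 N) (by positivity)
  calc ((N - a + 1 : ℕ) : ℝ) * k * ψ N
      = ∑ _n ∈ Finset.Icc a N, (k : ℝ) * ψ N := by
        rw [Finset.sum_const, Nat.card_Icc, nsmul_eq_mul]
        have h' : N + 1 - a = N - a + 1 := by omega
        rw [h']
        ring
    _ ≤ _ := Finset.sum_le_sum hterm

lemma two_mul_le_of_dvd {a b : ℕ} (h : a ∣ b) (hlt : a < b) : 2 * a ≤ b := by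
  obtain ⟨t, rfl⟩ := h
  have : 2 ≤ t := by
    rcases Nat.lt_or_ge t 2 with h2 | h2
    · interval_cases t <;> omega
    · exact h2
  nlinarith

/-- If `ψ` is non-negative decreasing, `𝒟` is a pseudo-absolute value sequence, and
`ψ(m_i)/|m_i|_𝒟 ≥ 1/2` along an infinite increasing sequence `{m_i}`, then
`∑ ℳ(n)ψ(n) = ∞` (partial sums are unbounded). -/
theorem divergence_from_large_values (nk : ℕ → ℕ) (h0 : nk 0 = 1) (hmono : StrictMono nk)
    (hdvd : ∀ k, nk k ∣ nk (k + 1)) (ψ : ℕ → ℝ) (hψ0 : ∀ n, 0 ≤ ψ n) (hψ : Antitone ψ)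
    (m : ℕ → ℕ) (hm : StrictMono m) (hm1 : ∀ i, 1 ≤ m i)
    (hlarge : ∀ i, (1 : ℝ) / 2 ≤ ψ (m i) * dabsInv nk (m i)) :
    ∀ C : ℝ, ∃ N : ℕ, C ≤ ∑ n ∈ Finset.Icc 1 N, (Mfun nk n : ℝ) * ψ n := by
  intro C
  rcases le_or_gt C 0 with hC | hC
  · exact ⟨1, le_trans hC (Finset.sum_nonneg fun n _ => by
      have := hψ0 n; positivity)⟩
  have hd : ∀ i, ∃ k, dabsInv nk (m i) = nk k ∧ nk k ∣ m i :=
    fun i => dabsInv_spec nk h0 (hm1 i)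
  set K : ℕ := 4 * ⌈C⌉₊ + 2 with hK
  by_cases hA : ∃ i k, nk k ∣ m i ∧ K ≤ k
  · -- Case A: some m i is divisible by a deep element nk k, k ≥ K
    obtain ⟨i, k, hdvd', hk⟩ := hA
    refine ⟨m i, ?_⟩
    set N := m i with hN
    have hN1 : 1 ≤ N := hm1 i
    have hkN : nk k ≤ N := Nat.le_of_dvd hN1 hdvd'
    have hk2 : 2 ≤ k := by omega
    have hdvd1 : nk (k - 1) ∣ nk k := by
      have := hdvd (k - 1)
      rwa [Nat.sub_add_cancel (by omega)] at this
    have hlt1 : nk (k - 1) < nk k := hmono (by omega)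
    have hdouble : 2 * nk (k - 1) ≤ nk k := two_mul_le_of_dvd hdvd1 hlt1
    have ha1 : 1 ≤ nk (k - 1) := h0 ▸ hmono.monotone (Nat.zero_le _)
    have haN : nk (k - 1) ≤ N := le_trans (le_of_lt hlt1) hkN
    -- ψ N ≥ 1 / (2 N)
    obtain ⟨j, hdj, hjdvd⟩ := hd i
    have hdle : (dabsInv nk N : ℝ) ≤ (N : ℝ) := by
      exact_mod_cast Nat.le_of_dvd hN1 (hdj ▸ hjdvd)
    have hd1 : (1 : ℝ) ≤ (dabsInv nk N : ℝ) := by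
      have : 1 ≤ nk j := h0 ▸ hmono.monotone (Nat.zero_le j)
      rw [hdj]; exact_mod_cast this
    have hψpos : (0:ℝ) ≤ ψ N := hψ0 N
    have hψN : 1 / (2 * (N : ℝ)) ≤ ψ N := by
      have h1 := hlarge i
      rw [div_le_iff₀ (by positivity)]
      nlinarith [h1]
    have hS := sum_lower nk hmono ψ hψ0 hψ (le_refl (nk (k - 1))) ha1 haN
    refine le_trans ?_ hS
    have hcast : ((N - nk (k-1) + 1 : ℕ) : ℝ) = (N : ℝ) - (nk (k-1) : ℝ) + 1 := by
      push_cast [haN]; ring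
    have hc1 : (N : ℝ) / 2 ≤ ((N - nk (k-1) + 1 : ℕ) : ℝ) := by
      rw [hcast]
      have : 2 * (nk (k-1) : ℝ) ≤ (N : ℝ) := by exact_mod_cast le_trans hdouble hkN
      linarith
    have hc2 : 4 * C + 1 ≤ ((k - 1 : ℕ) : ℝ) := by
      have h1 : (K : ℕ) - 1 ≤ k - 1 := by omega
      have h2 : ((K - 1 : ℕ) : ℝ) = 4 * (⌈C⌉₊ : ℝ) + 1 := by
        have he : K - 1 = 4 * ⌈C⌉₊ + 1 := by omega
        rw [he]; push_cast; ring
      have h3 : C ≤ (⌈C⌉₊ : ℝ) := Nat.le_ceil C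
      have h4 : ((K - 1 : ℕ) : ℝ) ≤ ((k - 1 : ℕ) : ℝ) := by exact_mod_cast h1
      linarith
    have hNpos : (0:ℝ) < (N : ℝ) := by exact_mod_cast hN1
    have key : C ≤ (N:ℝ)/2 * (4*C+1) * (1/(2*(N:ℝ))) := by
      have heq : (N:ℝ)/2 * (4*C+1) * (1/(2*(N:ℝ))) = (4*C+1)/4 := by
        field_simp; ring
      rw [heq]; linarith
    refine le_trans key ?_
    have hnn1 : (0:ℝ) ≤ (N:ℝ)/2 := by positivity
    have hnn2 : (0:ℝ) ≤ 4*C+1 := by linarith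
    apply mul_le_mul
    · exact mul_le_mul hc1 hc2 hnn2 (by positivity)
    · exact hψN
    · positivity
    · positivity
  · -- Case B: all dabsInv values are bounded by nk K
    push_neg at hA
    have hB1 : 1 ≤ nk K := h0 ▸ hmono.monotone (Nat.zero_le K)
    set B : ℕ := nk K with hBdef
    have hψi : ∀ i, 1 / (2 * (B : ℝ)) ≤ ψ (m i) := by
      intro i
      obtain ⟨j, hdj, hjdvd⟩ := hd i
      have hjK : j ≤ K := le_of_lt (hA i j hjdvd)
      have hle : (dabsInv nk (m i) : ℝ) ≤ (B : ℝ) := by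
        rw [hdj]; exact_mod_cast hmono.monotone hjK
      have h1 := hlarge i
      have hψpos := hψ0 (m i)
      rw [div_le_iff₀ (by positivity)]
      nlinarith
    set i : ℕ := nk 1 + 2 * B * (⌈C⌉₊ + 1) with hi
    refine ⟨m i, ?_⟩
    have hiN : i ≤ m i := hm.le_apply
    have h11 : 1 ≤ nk 1 := h0 ▸ hmono.monotone (by omega)
    have haN : nk 1 ≤ m i := le_trans (by omega) hiN
    have hS := sum_lower nk hmono ψ hψ0 hψ (le_refl (nk 1)) h11 haN
    simp only [Nat.cast_one, mul_one] at hS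
    refine le_trans ?_ hS
    have hc1 : 2 * (B:ℝ) * C ≤ ((m i - nk 1 + 1 : ℕ) : ℝ) := by
      have h1 : 2 * B * (⌈C⌉₊ + 1) ≤ m i - nk 1 + 1 := by omega
      have h2 : 2 * (B:ℝ) * C ≤ 2 * (B:ℝ) * ((⌈C⌉₊:ℝ) + 1) := by
        have h3 : C ≤ (⌈C⌉₊ : ℝ) + 1 := le_trans (Nat.le_ceil C) (by linarith)
        have hBpos : (0:ℝ) < (B:ℝ) := by exact_mod_cast hB1
        nlinarith
      have h4 : ((2 * B * (⌈C⌉₊ + 1) : ℕ) : ℝ) ≤ ((m i - nk 1 + 1 : ℕ) : ℝ) := by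
        exact_mod_cast h1
      push_cast at h4 ⊢
      linarith
    have hBpos : (0:ℝ) < (B:ℝ) := by exact_mod_cast hB1
    have key : C ≤ 2 * (B:ℝ) * C * (1 / (2 * (B:ℝ))) := by
      field_simp; rfl
    calc C ≤ 2 * (B:ℝ) * C * (1 / (2 * (B:ℝ))) := key
      _ ≤ ((m i - nk 1 + 1 : ℕ) : ℝ) * ψ (m i) :=
        mul_le_mul hc1 (hψi i) (by positivity) (by positivity)
end
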